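/- arXiv:1706.01960 — 4 statements merged into one kernel-verified Lean document; each statement's English description precedes it below -/
import Mathlib

section
/- Let Φ₁, Φ₂ : X → [0,∞) be measurable real-valued functions and set Z_i = ∫_X exp(−Φ_i(x)) dμ₀(x) for i = 1, 2, so that Z₁, Z₂ ∈ (0,1]. Then ∫_X ( √(exp(−Φ₁(x))/Z₁) − √(exp(−Φ₂(x))/Z₂) )² dμ₀(x) ≤ (2/Z₁) ∫_X ( exp(−Φ₁(x)/2) − exp(−Φ₂(x)/2) )² dμ₀(x) + 2 Z₂ ( Z₁^{−1/2} − Z₂^{−1/2} )². -/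
open MeasureTheory

noncomputable section

/-- Let Φ₁, Φ₂ : X → [0,∞) be measurable real-valued functions on a probability
space (X, 𝔛, μ₀) and set Z_i = ∫_X exp(−Φ_i(x)) dμ₀(x) for i = 1, 2, so that Z₁, Z₂ ∈ (0,1].
Then ∫_X ( √(exp(−Φ₁(x))/Z₁) − √(exp(−Φ₂(x))/Z₂) )² dμ₀(x)
  ≤ (2/Z₁) ∫_X ( exp(−Φ₁(x)/2) − exp(−Φ₂(x)/2) )² dμ₀(x) + 2 Z₂ ( Z₁^{−1/2} − Z₂^{−1/2} )². -/
theorem stmt_7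
    {X : Type*} [MeasurableSpace X] (μ₀ : Measure X) [IsProbabilityMeasure μ₀]
    (Φ₁ Φ₂ : X → ℝ) (hΦ₁_meas : Measurable Φ₁) (hΦ₂_meas : Measurable Φ₂)
    (hΦ₁_nonneg : ∀ x, 0 ≤ Φ₁ x) (hΦ₂_nonneg : ∀ x, 0 ≤ Φ₂ x)
    (Z₁ Z₂ : ℝ)
    (hZ₁ : Z₁ = ∫ x, Real.exp (-Φ₁ x) ∂μ₀)
    (hZ₂ : Z₂ = ∫ x, Real.exp (-Φ₂ x) ∂μ₀) :
    (0 < Z₁ ∧ Z₁ ≤ 1) ∧ (0 < Z₂ ∧ Z₂ ≤ 1) ∧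
    (∫ x, (Real.sqrt (Real.exp (-Φ₁ x) / Z₁) - Real.sqrt (Real.exp (-Φ₂ x) / Z₂)) ^ 2 ∂μ₀) ≤
      (2 / Z₁) * (∫ x, (Real.exp (-Φ₁ x / 2) - Real.exp (-Φ₂ x / 2)) ^ 2 ∂μ₀) +
        2 * Z₂ * ((Real.sqrt Z₁)⁻¹ - (Real.sqrt Z₂)⁻¹) ^ 2 := by
  have hint₁ : Integrable (fun x => Real.exp (-Φ₁ x)) μ₀ := by
    refine (integrable_const (1:ℝ)).mono'
      (hΦ₁_meas.neg.exp.aestronglyMeasurable) (Filter.Eventually.of_forall fun x => ?_)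
    rw [Real.norm_eq_abs, abs_of_pos (Real.exp_pos _)]
    exact Real.exp_le_one_iff.2 (neg_nonpos.2 (hΦ₁_nonneg x))
  have hint₂ : Integrable (fun x => Real.exp (-Φ₂ x)) μ₀ := by
    refine (integrable_const (1:ℝ)).mono'
      (hΦ₂_meas.neg.exp.aestronglyMeasurable) (Filter.Eventually.of_forall fun x => ?_)
    rw [Real.norm_eq_abs, abs_of_pos (Real.exp_pos _)]
    exact Real.exp_le_one_iff.2 (neg_nonpos.2 (hΦ₂_nonneg x))
  have hZ₁pos : 0 < Z₁ := hZ₁ ▸ integral_exp_pos hint₁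
  have hZ₂pos : 0 < Z₂ := hZ₂ ▸ integral_exp_pos hint₂
  have hZ₁le : Z₁ ≤ 1 := by
    rw [hZ₁]
    calc ∫ x, Real.exp (-Φ₁ x) ∂μ₀ ≤ ∫ _x, (1:ℝ) ∂μ₀ := by
          refine integral_mono hint₁ (integrable_const 1) fun x => ?_
          exact Real.exp_le_one_iff.2 (neg_nonpos.2 (hΦ₁_nonneg x))
      _ = 1 := by simp
  have hZ₂le : Z₂ ≤ 1 := by
    rw [hZ₂]
    calc ∫ x, Real.exp (-Φ₂ x) ∂μ₀ ≤ ∫ _x, (1:ℝ) ∂μ₀ := by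
          refine integral_mono hint₂ (integrable_const 1) fun x => ?_
          exact Real.exp_le_one_iff.2 (neg_nonpos.2 (hΦ₂_nonneg x))
      _ = 1 := by simp
  refine ⟨⟨hZ₁pos, hZ₁le⟩, ⟨hZ₂pos, hZ₂le⟩, ?_⟩
  set f : X → ℝ := fun x => Real.exp (-Φ₁ x / 2) with hf
  set g : X → ℝ := fun x => Real.exp (-Φ₂ x / 2) with hg
  set c : ℝ := (Real.sqrt Z₁)⁻¹ - (Real.sqrt Z₂)⁻¹ with hc
  have hs₁pos : 0 < Real.sqrt Z₁ := Real.sqrt_pos.2 hZ₁pos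
  have hs₂pos : 0 < Real.sqrt Z₂ := Real.sqrt_pos.2 hZ₂pos
  have hs₁ : Real.sqrt Z₁ ^ 2 = Z₁ := Real.sq_sqrt hZ₁pos.le
  have hs₂ : Real.sqrt Z₂ ^ 2 = Z₂ := Real.sq_sqrt hZ₂pos.le
  -- pointwise bound
  have key : ∀ x, (Real.sqrt (Real.exp (-Φ₁ x) / Z₁) - Real.sqrt (Real.exp (-Φ₂ x) / Z₂)) ^ 2 ≤
      2 / Z₁ * (f x - g x) ^ 2 + 2 * c ^ 2 * g x ^ 2 := by
    intro x
    have e₁ : Real.sqrt (Real.exp (-Φ₁ x)) = f x := by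
      rw [hf]
      rw [← Real.exp_half]
    have e₂ : Real.sqrt (Real.exp (-Φ₂ x)) = g x := by
      rw [hg]
      rw [← Real.exp_half]
    rw [Real.sqrt_div (Real.exp_pos _).le, Real.sqrt_div (Real.exp_pos _).le, e₁, e₂]
    have hsplit : f x / Real.sqrt Z₁ - g x / Real.sqrt Z₂
        = (f x - g x) / Real.sqrt Z₁ + g x * c := by
      rw [hc]; field_simp; ring
    rw [hsplit]
    have hu : ((f x - g x) / Real.sqrt Z₁) ^ 2 = (f x - g x) ^ 2 / Z₁ := by
      rw [div_pow, hs₁]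
    rw [show 2 / Z₁ * (f x - g x) ^ 2 = 2 * ((f x - g x) / Real.sqrt Z₁) ^ 2 from by
      rw [hu]; ring]
    nlinarith [sq_nonneg ((f x - g x) / Real.sqrt Z₁ - g x * c)]
  -- integrability of pieces
  have hf_meas : Measurable f := ((hΦ₁_meas.neg).div_const 2).exp
  have hg_meas : Measurable g := ((hΦ₂_meas.neg).div_const 2).exp
  have hf_le : ∀ x, f x ≤ 1 := fun x =>
    Real.exp_le_one_iff.2 (by have := hΦ₁_nonneg x; linarith)
  have hg_le : ∀ x, g x ≤ 1 := fun x =>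
    Real.exp_le_one_iff.2 (by have := hΦ₂_nonneg x; linarith)
  have hint_fg : Integrable (fun x => (f x - g x) ^ 2) μ₀ := by
    refine (integrable_const (1:ℝ)).mono'
      ((hf_meas.sub hg_meas).pow_const 2).aestronglyMeasurable
      (Filter.Eventually.of_forall fun x => ?_)
    rw [Real.norm_eq_abs, abs_of_nonneg (sq_nonneg _)]
    have h1 : f x - g x ≤ 1 := by have := Real.exp_pos (-Φ₂ x / 2); have := hf_le x; simp only [hg]; linarith
    have h2 : -1 ≤ f x - g x := by have := Real.exp_pos (-Φ₁ x / 2); have := hg_le x; simp only [hf]; linarith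
    nlinarith
  have hg_sq : ∀ x, g x ^ 2 = Real.exp (-Φ₂ x) := by
    intro x
    rw [hg, sq, ← Real.exp_add]
    ring_nf
  have hint_g2 : Integrable (fun x => g x ^ 2) μ₀ := by
    simpa only [hg_sq] using hint₂
  have hint_rhs : Integrable (fun x => 2 / Z₁ * (f x - g x) ^ 2 + 2 * c ^ 2 * g x ^ 2) μ₀ :=
    (hint_fg.const_mul _).add (hint_g2.const_mul _)
  have hmono := integral_mono_of_nonneg
    (Filter.Eventually.of_forall fun x => sq_nonneg _) hint_rhs
    (Filter.Eventually.of_forall key)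
  calc (∫ x, (Real.sqrt (Real.exp (-Φ₁ x) / Z₁) - Real.sqrt (Real.exp (-Φ₂ x) / Z₂)) ^ 2 ∂μ₀)
      ≤ ∫ x, (2 / Z₁ * (f x - g x) ^ 2 + 2 * c ^ 2 * g x ^ 2) ∂μ₀ := hmono
    _ = 2 / Z₁ * (∫ x, (f x - g x) ^ 2 ∂μ₀) + 2 * c ^ 2 * (∫ x, g x ^ 2 ∂μ₀) := by
        rw [integral_add (hint_fg.const_mul _) (hint_g2.const_mul _),
          integral_const_mul, integral_const_mul]
    _ = 2 / Z₁ * (∫ x, (f x - g x) ^ 2 ∂μ₀) + 2 * Z₂ * c ^ 2 := by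
        have : (∫ x, g x ^ 2 ∂μ₀) = Z₂ := by
          rw [hZ₂]; exact integral_congr_ae (Filter.Eventually.of_forall fun x => hg_sq x)
        rw [this]; ring
end
end

section
/- Let μ₀ be a Borel probability measure on C(D̄) (with the supremum norm) such that ∫ ‖u‖_{L¹(D)}² dμ₀(u) < ∞, and for y ∈ ℝ^J set Z(y) = ∫ exp(−Φ(u,y)) dμ₀(u), which lies in (0,1]. Then for every ρ > 0 there exists a constant C = C(ρ) such that for all y, y' ∈ ℝ^J with |y| < ρ and |y'| < ρ, one has ∫ ( √(exp(−Φ(u,y))/Z(y)) − √(exp(−Φ(u,y'))/Z(y')) )² dμ₀(u) ≤ C² |y − y'|²; that is, the Hellinger distance between the posterior measures with densities exp(−Φ(·,y))/Z(y) and exp(−Φ(·,y'))/Z(y') with respect to μ₀ is at most C |y − y'|. -/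
open MeasureTheory RealInnerProductSpace

noncomputable section

-- Extension by zero of a continuous function on `closure D` to the whole space.
open Classical in
def extend {d : ℕ} (D : Set (EuclideanSpace ℝ (Fin d))) (u : C(closure D, ℝ)) :
    EuclideanSpace ℝ (Fin d) → ℝ :=
  fun x => if h : x ∈ closure D then u ⟨x, h⟩ else 0

lemma abs_int_le {X : Type*} [MeasurableSpace X] (μ : MeasureTheory.Measure X) (f : X → ℝ) :
    |∫ x, f x ∂μ| ≤ ∫ x, |f x| ∂μ := by
  simpa [Real.norm_eq_abs] using MeasureTheory.norm_integral_le_integral_norm (μ := μ) f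

lemma exp_neg_lip {s t : ℝ} (hs : 0 ≤ s) (ht : 0 ≤ t) :
    |Real.exp (-s) - Real.exp (-t)| ≤ |s - t| := by
  wlog h : s ≤ t generalizing s t
  · rw [abs_sub_comm, abs_sub_comm s t]; exact this ht hs (le_of_not_ge h)
  have h1 : Real.exp (-t) ≤ Real.exp (-s) := Real.exp_le_exp.2 (by linarith)
  have key : Real.exp (-s) - Real.exp (-t) ≤ t - s := by
    have e1 : Real.exp (-s) ≤ 1 := Real.exp_le_one_iff.2 (by linarith)
    have e2 : (s - t) + 1 ≤ Real.exp (s - t) := Real.add_one_le_exp _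
    have e3 : Real.exp (-t) = Real.exp (-s) * Real.exp (s - t) := by
      rw [← Real.exp_add]; ring_nf
    have e4 : 0 < Real.exp (-s) := Real.exp_pos _
    nlinarith
  rw [abs_of_nonneg (sub_nonneg.2 h1), abs_sub_comm, abs_of_nonneg (sub_nonneg.2 h)]
  exact key

lemma sqrt_inv_lip {z z' z₀ : ℝ} (h₀ : 0 < z₀) (hz : z₀ ≤ z) (hz' : z₀ ≤ z') :
    |(Real.sqrt z)⁻¹ - (Real.sqrt z')⁻¹| ≤ |z - z'| / (2 * Real.sqrt z₀ ^ 3) := by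
  have hz0 : 0 < z := h₀.trans_le hz
  have hz'0 : 0 < z' := h₀.trans_le hz'
  have hs : 0 < Real.sqrt z := Real.sqrt_pos.2 hz0
  have hs' : 0 < Real.sqrt z' := Real.sqrt_pos.2 hz'0
  have hs₀ : 0 < Real.sqrt z₀ := Real.sqrt_pos.2 h₀
  have hss : Real.sqrt z₀ ≤ Real.sqrt z := Real.sqrt_le_sqrt hz
  have hss' : Real.sqrt z₀ ≤ Real.sqrt z' := Real.sqrt_le_sqrt hz'
  have q : Real.sqrt z ^ 2 = z := Real.sq_sqrt hz0.le
  have q' : Real.sqrt z' ^ 2 = z' := Real.sq_sqrt hz'0.le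
  have key : (Real.sqrt z)⁻¹ - (Real.sqrt z')⁻¹
      = (z' - z) / (Real.sqrt z * Real.sqrt z' * (Real.sqrt z + Real.sqrt z')) := by
    rw [eq_div_iff (by positivity)]
    field_simp
    linear_combination q' - q
  rw [key, abs_div, abs_of_pos (by positivity :
    (0:ℝ) < Real.sqrt z * Real.sqrt z' * (Real.sqrt z + Real.sqrt z'))]
  have hden : 2 * Real.sqrt z₀ ^ 3 ≤ Real.sqrt z * Real.sqrt z' * (Real.sqrt z + Real.sqrt z') := by
    have h1 : Real.sqrt z₀ * Real.sqrt z₀ ≤ Real.sqrt z * Real.sqrt z' :=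
      mul_le_mul hss hss' hs₀.le hs.le
    nlinarith [mul_le_mul h1 (by linarith : Real.sqrt z₀ + Real.sqrt z₀ ≤ Real.sqrt z + Real.sqrt z')
      (by positivity) (by positivity)]
  calc |z' - z| / (Real.sqrt z * Real.sqrt z' * (Real.sqrt z + Real.sqrt z'))
      ≤ |z' - z| / (2 * Real.sqrt z₀ ^ 3) :=
        div_le_div_of_nonneg_left (abs_nonneg _) (by positivity) hden
    _ = |z - z'| / (2 * Real.sqrt z₀ ^ 3) := by rw [abs_sub_comm]

set_option maxHeartbeats 2000000 in
/-- Let μ₀ be a Borel probability measure on C(D̄) (with the supremum norm) such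
that ∫ ‖u‖_{L¹(D)}² dμ₀(u) < ∞, and for y ∈ ℝ^J set Z(y) = ∫ exp(−Φ(u,y)) dμ₀(u), which lies
in (0,1]. Then for every ρ > 0 there exists C = C(ρ) such that for all y, y' with |y| < ρ,
|y'| < ρ, the squared Hellinger-type integral
∫ ( √(exp(−Φ(u,y))/Z(y)) − √(exp(−Φ(u,y'))/Z(y')) )² dμ₀(u) is at most C²|y − y'|². -/
theorem stmt_8
    (d J : ℕ)
    -- D = (0,1)^d ⊂ ℝ^d, the open unit cube
    (D : Set (EuclideanSpace ℝ (Fin d)))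
    (hD : D = WithLp.ofLp ⁻¹' (Set.univ.pi fun _ => Set.Ioo (0 : ℝ) 1))
    -- K : L¹(D) → ℝ^J bounded linear operator (modelled via its action on integrable
    -- representatives: additive, homogeneous and bounded by the L¹(D)-norm)
    (K : (EuclideanSpace ℝ (Fin d) → ℝ) → EuclideanSpace ℝ (Fin J))
    (CK : ℝ)
    (hK_add : ∀ u v, IntegrableOn u D → IntegrableOn v D → K (u + v) = K u + K v)
    (hK_smul : ∀ (a : ℝ) u, IntegrableOn u D → K (a • u) = a • K u)
    (hK_bdd : ∀ u, IntegrableOn u D → ‖K u‖ ≤ CK * ∫ x in D, |u x|)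
    -- Σ : symmetric positive definite J×J matrix, with inverse Σ⁻¹;
    -- |Σ^{-1/2} e|² := ⟨Σ⁻¹ e, e⟩
    (Sig Siginv : EuclideanSpace ℝ (Fin J) →L[ℝ] EuclideanSpace ℝ (Fin J))
    (hSig_sym : ∀ z w, ⟪Sig z, w⟫ = ⟪z, Sig w⟫)
    (hSig_pos : ∀ z, z ≠ 0 → 0 < ⟪Sig z, z⟫)
    (hSiginv : ∀ z, Sig (Siginv z) = z ∧ Siginv (Sig z) = z)
    -- constants
    (ε r b c : ℝ) (hε : ε ∈ Set.Ioo (0 : ℝ) 1) (hr : 0 < r) (hb : 0 < b) (hc : 0 ≤ c)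
    -- the double-well potential Ψ
    (Ψ : (EuclideanSpace ℝ (Fin d) → ℝ) → ℝ)
    (hΨ : ∀ u, Ψ u = (r / ε ^ b) * ∫ x in D, (1 / 4 : ℝ) * (1 - u x ^ 2) ^ 2)
    -- the data misfit F
    (F : (EuclideanSpace ℝ (Fin d) → ℝ) → EuclideanSpace ℝ (Fin J) → ℝ)
    (hF : ∀ u y, F u y = (1 / (2 * ε ^ (2 * c))) * ⟪Siginv (y - K u), y - K u⟫)
    -- Φ = Ψ + F, as a function of continuous functions on D̄
    (Φ : C(closure D, ℝ) → EuclideanSpace ℝ (Fin J) → ℝ)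
    (hΦ : ∀ u y, Φ u y = Ψ (extend D u) + F (extend D u) y)
    -- μ₀ : Borel probability measure on C(D̄) with finite second L¹(D)-moment
    [MeasurableSpace C(closure D, ℝ)] [BorelSpace C(closure D, ℝ)]
    (μ₀ : Measure C(closure D, ℝ)) [IsProbabilityMeasure μ₀]
    (hmoment : Integrable (fun u : C(closure D, ℝ) => (∫ x in D, |extend D u x|) ^ 2) μ₀)
    -- the normalization constant
    (Z : EuclideanSpace ℝ (Fin J) → ℝ)
    (hZ : ∀ y, Z y = ∫ u, Real.exp (-Φ u y) ∂μ₀) :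
    (∀ y, 0 < Z y ∧ Z y ≤ 1) ∧
    ∀ ρ > (0 : ℝ), ∃ C : ℝ,
      ∀ y y' : EuclideanSpace ℝ (Fin J), ‖y‖ < ρ → ‖y'‖ < ρ →
        (∫ u, (Real.sqrt (Real.exp (-Φ u y) / Z y) -
            Real.sqrt (Real.exp (-Φ u y') / Z y')) ^ 2 ∂μ₀) ≤ C ^ 2 * ‖y - y'‖ ^ 2 := by
  obtain ⟨hε0, hε1⟩ := hε
  -- geometry of D
  have hbD : Bornology.IsBounded D := by
    rw [isBounded_iff_forall_norm_le]
    refine ⟨Real.sqrt d, fun x hx => ?_⟩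
    rw [EuclideanSpace.norm_eq]
    have hcoord : ∀ i, ‖x i‖ ^ 2 ≤ 1 := by
      intro i
      rw [hD] at hx
      have hi := hx i (Set.mem_univ i)
      simp only [Set.mem_Ioo] at hi
      rw [Real.norm_eq_abs, sq_abs]
      nlinarith [hi.1, hi.2]
    calc Real.sqrt (∑ i, ‖x i‖ ^ 2) ≤ Real.sqrt (∑ _i : Fin d, (1 : ℝ)) :=
          Real.sqrt_le_sqrt (Finset.sum_le_sum fun i _ => hcoord i)
      _ = Real.sqrt d := by simp
  have hcomp : IsCompact (closure D) := hbD.isCompact_closure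
  haveI : CompactSpace (closure D) := isCompact_iff_compactSpace.mp hcomp
  have hvolfin : volume (closure D) < ⊤ := hcomp.measure_lt_top
  set V : ℝ := (volume (closure D)).toReal with hVdef
  have hV0 : 0 ≤ V := ENNReal.toReal_nonneg
  have hsub : D ⊆ closure D := subset_closure
  have hvolD : volume D < ⊤ := lt_of_le_of_lt (measure_mono hsub) hvolfin
  have hVD : (volume D).toReal ≤ V := ENNReal.toReal_mono hvolfin.ne (measure_mono hsub)
  -- facts about extend
  have hextC : ∀ u : C(closure D, ℝ), ContinuousOn (extend D u) (closure D) := by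
    intro u
    rw [continuousOn_iff_continuous_restrict]
    have h : Set.restrict (closure D) (extend D u) = ⇑u := by
      funext x; exact dif_pos x.2
    exact (congrArg Continuous h).mpr u.continuous
  have hextAbs : ∀ (u : C(closure D, ℝ)) x, |extend D u x| ≤ ‖u‖ := by
    intro u x
    by_cases h : x ∈ closure D
    · simp only [_root_.extend, dif_pos h]; exact u.norm_coe_le_norm ⟨x, h⟩
    · simp only [_root_.extend, dif_neg h, abs_zero]; exact norm_nonneg u
  have hextSub : ∀ u v : C(closure D, ℝ), ∀ x,
      extend D u x - extend D v x = extend D (u - v) x := by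
    intro u v x
    by_cases h : x ∈ closure D
    · simp [_root_.extend, dif_pos h]
    · simp [_root_.extend, dif_neg h]
  have hextAdd : ∀ u v : C(closure D, ℝ), extend D v + extend D (u - v) = extend D u := by
    intro u v; funext x
    by_cases h : x ∈ closure D
    · simp [_root_.extend, dif_pos h]
    · simp [_root_.extend, dif_neg h]
  have hIntOn : ∀ u : C(closure D, ℝ), IntegrableOn (extend D u) D :=
    fun u => (ContinuousOn.integrableOn_compact hcomp (hextC u)).mono_set hsub
  have hIntAbs : ∀ u : C(closure D, ℝ), IntegrableOn (fun x => |extend D u x|) D :=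
    fun u => (hIntOn u).abs
  -- the L¹ norm functional N
  set N : C(closure D, ℝ) → ℝ := fun u => ∫ x in D, |extend D u x| with hNdef
  have hN0 : ∀ u, 0 ≤ N u := fun u => integral_nonneg fun x => abs_nonneg _
  have hNle : ∀ u, N u ≤ V * ‖u‖ := by
    intro u
    have h1 : N u ≤ ∫ _x in D, ‖u‖ := by
      rw [hNdef]
      exact integral_mono (hIntAbs u) (integrableOn_const hvolD.ne)
        fun x => hextAbs u x
    have h2 : (∫ _x in D, ‖u‖ : ℝ) = (volume D).toReal * ‖u‖ := by
      rw [setIntegral_const, smul_eq_mul]; rfl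
    nlinarith [mul_le_mul_of_nonneg_right hVD (norm_nonneg u)]
  have hNdiff : ∀ u v, |N u - N v| ≤ V * ‖u - v‖ := by
    intro u v
    have h1 : |N u - N v| ≤ N (u - v) := by
      have e1 : N u - N v = ∫ x in D, (|extend D u x| - |extend D v x|) :=
        (integral_sub (hIntAbs u) (hIntAbs v)).symm
      rw [e1]
      calc |∫ x in D, (|extend D u x| - |extend D v x|)|
          ≤ ∫ x in D, |(|extend D u x| - |extend D v x|)| := abs_int_le _ _
        _ ≤ ∫ x in D, |extend D (u - v) x| := by
            refine integral_mono (((hIntAbs u).sub (hIntAbs v)).abs) (hIntAbs (u - v))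
              fun x => ?_
            rw [← hextSub u v x]
            exact abs_abs_sub_abs_le_abs_sub _ _
        _ = N (u - v) := rfl
    exact h1.trans (hNle (u - v))
  have hNcont : Continuous N := by
    refine (LipschitzWith.of_dist_le_mul (K := V.toNNReal) fun u v => ?_).continuous
    rw [Real.coe_toNNReal _ hV0, Real.dist_eq, dist_eq_norm]
    exact hNdiff u v
  -- facts about K ∘ extend
  have hKN : ∀ u : C(closure D, ℝ), ‖K (extend D u)‖ ≤ CK * N u := fun u => hK_bdd _ (hIntOn u)
  have hCKN0 : ∀ u, 0 ≤ CK * N u := fun u => (norm_nonneg _).trans (hKN u)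
  have hKsub : ∀ u v : C(closure D, ℝ),
      K (extend D u) - K (extend D v) = K (extend D (u - v)) := by
    intro u v
    have h := hK_add _ _ (hIntOn v) (hIntOn (u - v))
    rw [hextAdd u v] at h
    rw [h]
    abel
  have hKcont : Continuous fun u : C(closure D, ℝ) => K (extend D u) := by
    refine (LipschitzWith.of_dist_le_mul (K := (|CK| * V).toNNReal)
      fun u v => ?_).continuous
    rw [Real.coe_toNNReal _ (by positivity), dist_eq_norm, dist_eq_norm, hKsub u v]
    have h1 : ‖K (extend D (u - v))‖ ≤ CK * N (u - v) := hKN _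
    have h2 : CK * N (u - v) ≤ |CK| * N (u - v) :=
      mul_le_mul_of_nonneg_right (le_abs_self CK) (hN0 _)
    have h3 : |CK| * N (u - v) ≤ |CK| * (V * ‖u - v‖) :=
      mul_le_mul_of_nonneg_left (hNle _) (abs_nonneg _)
    nlinarith
  -- the double-well integral functional I
  have hgC : ∀ u : C(closure D, ℝ),
      ContinuousOn (fun x => (1 / 4 : ℝ) * (1 - extend D u x ^ 2) ^ 2) (closure D) :=
    fun u => continuousOn_const.mul ((continuousOn_const.sub ((hextC u).pow 2)).pow 2)
  have hgInt : ∀ u : C(closure D, ℝ),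
      IntegrableOn (fun x => (1 / 4 : ℝ) * (1 - extend D u x ^ 2) ^ 2) D :=
    fun u => (ContinuousOn.integrableOn_compact hcomp (hgC u)).mono_set hsub
  set I : C(closure D, ℝ) → ℝ := fun u => ∫ x in D, (1 / 4 : ℝ) * (1 - extend D u x ^ 2) ^ 2
    with hIdef
  have hI0 : ∀ u, 0 ≤ I u := fun u => integral_nonneg fun x => by positivity
  have hgLip : ∀ (a B R : ℝ), |a| ≤ R → |B| ≤ R →
      |(1 / 4 : ℝ) * (1 - a ^ 2) ^ 2 - (1 / 4) * (1 - B ^ 2) ^ 2| ≤ R * (1 + R ^ 2) * |a - B| := by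
    intro a B R ha hB
    have hR : 0 ≤ R := (abs_nonneg a).trans ha
    have e : (1 / 4 : ℝ) * (1 - a ^ 2) ^ 2 - (1 / 4) * (1 - B ^ 2) ^ 2
        = (a - B) * ((1 / 4) * ((a + B) * (a ^ 2 + B ^ 2 - 2))) := by ring
    rw [e, abs_mul]
    have ha2 : a ^ 2 ≤ R ^ 2 := sq_le_sq' (abs_le.mp ha).1 (abs_le.mp ha).2
    have hB2 : B ^ 2 ≤ R ^ 2 := sq_le_sq' (abs_le.mp hB).1 (abs_le.mp hB).2
    have h3 : |a + B| ≤ 2 * R := (abs_add_le a B).trans (by linarith)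
    have h4 : |a ^ 2 + B ^ 2 - 2| ≤ 2 + 2 * R ^ 2 := by
      rw [abs_le]
      constructor
      · nlinarith [sq_nonneg a, sq_nonneg B]
      · nlinarith [sq_nonneg a, sq_nonneg B]
    have h2 : |(1 / 4 : ℝ) * ((a + B) * (a ^ 2 + B ^ 2 - 2))| ≤ R * (1 + R ^ 2) := by
      calc |(1 / 4 : ℝ) * ((a + B) * (a ^ 2 + B ^ 2 - 2))|
          = (1 / 4) * (|a + B| * |a ^ 2 + B ^ 2 - 2|) := by
            rw [abs_mul, abs_mul]; norm_num
        _ ≤ (1 / 4) * ((2 * R) * (2 + 2 * R ^ 2)) := by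
            have := mul_le_mul h3 h4 (abs_nonneg _) (by positivity)
            linarith
        _ = R * (1 + R ^ 2) := by ring
    calc |a - B| * |(1 / 4 : ℝ) * ((a + B) * (a ^ 2 + B ^ 2 - 2))|
        ≤ |a - B| * (R * (1 + R ^ 2)) := mul_le_mul_of_nonneg_left h2 (abs_nonneg _)
      _ = R * (1 + R ^ 2) * |a - B| := by ring
  have hIlip : ∀ u v : C(closure D, ℝ),
      |I u - I v| ≤ V * ((‖u‖ + ‖v‖) * (1 + (‖u‖ + ‖v‖) ^ 2)) * ‖u - v‖ := by
    intro u v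
    set R := ‖u‖ + ‖v‖ with hRdef
    have hRu : ∀ x, |extend D u x| ≤ R :=
      fun x => (hextAbs u x).trans (le_add_of_nonneg_right (norm_nonneg v))
    have hRv : ∀ x, |extend D v x| ≤ R :=
      fun x => (hextAbs v x).trans (le_add_of_nonneg_left (norm_nonneg u))
    have hR0 : 0 ≤ R := add_nonneg (norm_nonneg u) (norm_nonneg v)
    have e1 : I u - I v = ∫ x in D,
        ((1 / 4 : ℝ) * (1 - extend D u x ^ 2) ^ 2 - (1 / 4) * (1 - extend D v x ^ 2) ^ 2) :=
      (integral_sub (hgInt u) (hgInt v)).symm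
    rw [e1]
    have step1 : |∫ x in D, ((1 / 4 : ℝ) * (1 - extend D u x ^ 2) ^ 2
          - (1 / 4) * (1 - extend D v x ^ 2) ^ 2)|
        ≤ ∫ x in D, |(1 / 4 : ℝ) * (1 - extend D u x ^ 2) ^ 2
          - (1 / 4) * (1 - extend D v x ^ 2) ^ 2| := abs_int_le _ _
    have step2 : (∫ x in D, |(1 / 4 : ℝ) * (1 - extend D u x ^ 2) ^ 2
          - (1 / 4) * (1 - extend D v x ^ 2) ^ 2|)
        ≤ ∫ _x in D, R * (1 + R ^ 2) * ‖u - v‖ := by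
      refine integral_mono (((hgInt u).sub (hgInt v)).abs)
        (integrableOn_const hvolD.ne) fun x => ?_
      calc |(1 / 4 : ℝ) * (1 - extend D u x ^ 2) ^ 2 - (1 / 4) * (1 - extend D v x ^ 2) ^ 2|
          ≤ R * (1 + R ^ 2) * |extend D u x - extend D v x| := hgLip _ _ R (hRu x) (hRv x)
        _ ≤ R * (1 + R ^ 2) * ‖u - v‖ := by
            refine mul_le_mul_of_nonneg_left ?_ (by positivity)
            rw [hextSub u v x]
            exact hextAbs (u - v) x
    have step3 : (∫ _x in D, R * (1 + R ^ 2) * ‖u - v‖ : ℝ)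
        = (volume D).toReal * (R * (1 + R ^ 2) * ‖u - v‖) := by
      rw [setIntegral_const, smul_eq_mul]; rfl
    have hfac : 0 ≤ R * (1 + R ^ 2) * ‖u - v‖ := by positivity
    refine (step1.trans (step2.trans step3.le)).trans ?_
    have h9 := mul_le_mul_of_nonneg_right hVD hfac
    nlinarith [h9]
  have hIcont : Continuous I := by
    rw [continuous_iff_continuousAt]
    intro u₀
    rw [ContinuousAt, tendsto_iff_dist_tendsto_zero]
    have hbc : Continuous fun v : C(closure D, ℝ) =>
        V * ((‖v‖ + ‖u₀‖) * (1 + (‖v‖ + ‖u₀‖) ^ 2)) * ‖v - u₀‖ := by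
      have c1 : Continuous fun v : C(closure D, ℝ) => ‖v‖ + ‖u₀‖ :=
        continuous_norm.add continuous_const
      exact (continuous_const.mul (c1.mul (continuous_const.add (c1.pow 2)))).mul
        ((continuous_id.sub continuous_const).norm)
    have hb0 : Filter.Tendsto (fun v : C(closure D, ℝ) =>
        V * ((‖v‖ + ‖u₀‖) * (1 + (‖v‖ + ‖u₀‖) ^ 2)) * ‖v - u₀‖) (nhds u₀) (nhds 0) := by
      have h0 : V * ((‖u₀‖ + ‖u₀‖) * (1 + (‖u₀‖ + ‖u₀‖) ^ 2)) * ‖u₀ - u₀‖ = 0 := by simp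
      exact h0 ▸ hbc.tendsto u₀
    refine squeeze_zero (fun v => dist_nonneg) (fun v => ?_) hb0
    rw [Real.dist_eq]
    exact hIlip v u₀
  -- constants
  have hεb : (0 : ℝ) < ε ^ b := Real.rpow_pos_of_pos hε0 b
  have hεc : (0 : ℝ) < ε ^ (2 * c) := Real.rpow_pos_of_pos hε0 _
  set α : ℝ := 1 / (2 * ε ^ (2 * c)) with hαdef
  have hα : 0 < α := by positivity
  set S : ℝ := ‖Siginv‖ with hSdef
  have hS0 : 0 ≤ S := norm_nonneg _
  set c₁ : ℝ := r / ε ^ b with hc₁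
  have hc₁0 : 0 ≤ c₁ := by positivity
  -- inner product facts
  have hSinv_sym : ∀ a w : EuclideanSpace ℝ (Fin J), ⟪Siginv a, w⟫ = ⟪a, Siginv w⟫ := by
    intro a w
    calc ⟪Siginv a, w⟫ = ⟪Siginv a, Sig (Siginv w)⟫ := by rw [(hSiginv w).1]
      _ = ⟪Sig (Siginv a), Siginv w⟫ := (hSig_sym _ _).symm
      _ = ⟪a, Siginv w⟫ := by rw [(hSiginv a).1]
  have hq0 : ∀ e : EuclideanSpace ℝ (Fin J), 0 ≤ ⟪Siginv e, e⟫ := by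
    intro e
    by_cases hz : Siginv e = 0
    · rw [hz, inner_zero_left]
    · have h1 : ⟪Siginv e, e⟫ = ⟪Sig (Siginv e), Siginv e⟫ := by
        calc ⟪Siginv e, e⟫ = ⟪Siginv e, Sig (Siginv e)⟫ := by rw [(hSiginv e).1]
          _ = ⟪Sig (Siginv e), Siginv e⟫ := (hSig_sym _ _).symm
      rw [h1]
      exact (hSig_pos _ hz).le
  have hqdiff : ∀ e e' : EuclideanSpace ℝ (Fin J),
      ⟪Siginv e, e⟫ - ⟪Siginv e', e'⟫ = ⟪Siginv (e - e'), e + e'⟫ := by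
    intro e e'
    have h1 : ⟪Siginv e, e'⟫ = ⟪Siginv e', e⟫ := by
      rw [hSinv_sym]; exact real_inner_comm _ _
    rw [map_sub, inner_sub_left, inner_add_right, inner_add_right]
    linarith
  have hqcont : Continuous fun e : EuclideanSpace ℝ (Fin J) => ⟪Siginv e, e⟫ :=
    Siginv.continuous.inner continuous_id
  -- Φ rewritten
  have hΦeq : ∀ u y, Φ u y = c₁ * I u
      + α * ⟪Siginv (y - K (extend D u)), y - K (extend D u)⟫ := by
    intro u y
    rw [hΦ, hΨ, hF]
  have hΦ0 : ∀ u y, 0 ≤ Φ u y := fun u y => by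
    rw [hΦeq]
    exact add_nonneg (mul_nonneg hc₁0 (hI0 u)) (mul_nonneg hα.le (hq0 _))
  have hΦcont : ∀ y, Continuous fun u => Φ u y := by
    intro y
    have e : (fun u => Φ u y) = fun u => c₁ * I u
        + α * ⟪Siginv (y - K (extend D u)), y - K (extend D u)⟫ := funext fun u => hΦeq u y
    rw [e]
    exact (continuous_const.mul hIcont).add
      (continuous_const.mul (hqcont.comp (continuous_const.sub hKcont)))
  -- integrability helpers
  have hexp_int : ∀ W : C(closure D, ℝ) → ℝ, Continuous W → (∀ u, 0 ≤ W u) →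
      Integrable (fun u => Real.exp (-W u)) μ₀ := by
    intro W hWc hW0
    refine Integrable.mono' (integrable_const 1)
      ((Real.continuous_exp.comp hWc.neg).aestronglyMeasurable)
      (Filter.Eventually.of_forall fun u => ?_)
    rw [Real.norm_eq_abs, abs_of_pos (Real.exp_pos _)]
    exact Real.exp_le_one_iff.2 (by linarith [hW0 u])
  have hpos_int : ∀ f : C(closure D, ℝ) → ℝ, Integrable f μ₀ → (∀ u, 0 < f u) →
      0 < ∫ u, f u ∂μ₀ := by
    intro f hf h0
    rw [integral_pos_iff_support_of_nonneg (fun u => (h0 u).le) hf]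
    have hsupp : Function.support f = Set.univ := Set.eq_univ_of_forall fun u => (h0 u).ne'
    rw [hsupp]
    simp
  have hfint : ∀ y, Integrable (fun u => Real.exp (-Φ u y)) μ₀ :=
    fun y => hexp_int _ (hΦcont y) fun u => hΦ0 u y
  have hZpos : ∀ y, 0 < Z y := fun y => by
    rw [hZ]; exact hpos_int _ (hfint y) fun u => Real.exp_pos _
  have hZle1 : ∀ y, Z y ≤ 1 := by
    intro y
    rw [hZ]
    calc (∫ u, Real.exp (-Φ u y) ∂μ₀) ≤ ∫ _u, (1 : ℝ) ∂μ₀ :=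
        integral_mono (hfint y) (integrable_const 1)
          fun u => Real.exp_le_one_iff.2 (by linarith [hΦ0 u y])
      _ = 1 := by simp
  refine ⟨fun y => ⟨hZpos y, hZle1 y⟩, ?_⟩
  -- Part 2
  intro ρ hρ
  set G : C(closure D, ℝ) → ℝ := fun u => α * S * (2 * ρ + 2 * (CK * N u)) with hGdef
  have hG0 : ∀ u, 0 ≤ G u := fun u =>
    mul_nonneg (mul_nonneg hα.le hS0) (by linarith [hCKN0 u])
  have hNint2 : Integrable (fun u => N u ^ 2) μ₀ := by
    rw [hNdef]; exact hmoment
  have hNint : Integrable N μ₀ := by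
    refine Integrable.mono' (hNint2.add (integrable_const 1)) hNcont.aestronglyMeasurable
      (Filter.Eventually.of_forall fun u => ?_)
    rw [Real.norm_eq_abs, abs_of_nonneg (hN0 u)]
    show N u ≤ N u ^ 2 + 1
    nlinarith [hN0 u, sq_nonneg (N u - 1)]
  have hGint : Integrable G μ₀ := by
    have e : G = fun u => α * S * (2 * ρ) + (α * S * 2 * CK) * N u :=
      funext fun u => by simp only [hGdef]; ring
    rw [e]
    exact (integrable_const _).add (hNint.const_mul _)
  have hGint2 : Integrable (fun u => G u ^ 2) μ₀ := by
    have e : (fun u => G u ^ 2) = fun u =>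
        ((α * S * (2 * ρ)) ^ 2 + (2 * (α * S * (2 * ρ)) * (α * S * 2 * CK)) * N u)
          + (α * S * 2 * CK) ^ 2 * N u ^ 2 :=
      funext fun u => by simp only [hGdef]; ring
    rw [e]
    exact ((integrable_const _).add (hNint.const_mul _)).add (hNint2.const_mul _)
  have hΦlip : ∀ (u : C(closure D, ℝ)) (y y' : EuclideanSpace ℝ (Fin J)),
      ‖y‖ < ρ → ‖y'‖ < ρ → |Φ u y - Φ u y'| ≤ G u * ‖y - y'‖ := by
    intro u y y' hy hy'
    have e1 : Φ u y - Φ u y' = α * ⟪Siginv ((y - K (extend D u)) - (y' - K (extend D u))),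
        (y - K (extend D u)) + (y' - K (extend D u))⟫ := by
      rw [hΦeq, hΦeq, ← hqdiff]; ring
    have e2 : (y - K (extend D u)) - (y' - K (extend D u)) = y - y' := by abel
    rw [e1, e2, abs_mul, abs_of_pos hα]
    have h3 : |⟪Siginv (y - y'), (y - K (extend D u)) + (y' - K (extend D u))⟫|
        ≤ S * ‖y - y'‖ * ‖(y - K (extend D u)) + (y' - K (extend D u))‖ := by
      calc |⟪Siginv (y - y'), (y - K (extend D u)) + (y' - K (extend D u))⟫|
          ≤ ‖Siginv (y - y')‖ * ‖(y - K (extend D u)) + (y' - K (extend D u))‖ :=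
            abs_real_inner_le_norm _ _
        _ ≤ (S * ‖y - y'‖) * ‖(y - K (extend D u)) + (y' - K (extend D u))‖ :=
            mul_le_mul_of_nonneg_right (Siginv.le_opNorm _) (norm_nonneg _)
    have h4 : ‖(y - K (extend D u)) + (y' - K (extend D u))‖ ≤ 2 * ρ + 2 * (CK * N u) := by
      calc ‖(y - K (extend D u)) + (y' - K (extend D u))‖
          ≤ ‖y - K (extend D u)‖ + ‖y' - K (extend D u)‖ := norm_add_le _ _
        _ ≤ (‖y‖ + ‖K (extend D u)‖) + (‖y'‖ + ‖K (extend D u)‖) :=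
            add_le_add (norm_sub_le _ _) (norm_sub_le _ _)
        _ ≤ 2 * ρ + 2 * (CK * N u) := by linarith [hKN u]
    have h5 : |⟪Siginv (y - y'), (y - K (extend D u)) + (y' - K (extend D u))⟫|
        ≤ S * ‖y - y'‖ * (2 * ρ + 2 * (CK * N u)) :=
      h3.trans (mul_le_mul_of_nonneg_left h4 (by positivity))
    calc α * |⟪Siginv (y - y'), (y - K (extend D u)) + (y' - K (extend D u))⟫|
        ≤ α * (S * ‖y - y'‖ * (2 * ρ + 2 * (CK * N u))) :=
          mul_le_mul_of_nonneg_left h5 hα.le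
      _ = G u * ‖y - y'‖ := by simp only [hGdef]; ring
  -- lower bound for Z on the ball
  set W : C(closure D, ℝ) → ℝ := fun u => c₁ * I u + α * (S * (ρ + CK * N u) ^ 2) with hWdef
  have hW0 : ∀ u, 0 ≤ W u := fun u => add_nonneg (mul_nonneg hc₁0 (hI0 u))
    (mul_nonneg hα.le (mul_nonneg hS0 (sq_nonneg _)))
  have hWcont : Continuous W := by
    rw [hWdef]
    exact (continuous_const.mul hIcont).add (continuous_const.mul (continuous_const.mul
      ((continuous_const.add (continuous_const.mul hNcont)).pow 2)))
  have hΦleW : ∀ u y, ‖y‖ < ρ → Φ u y ≤ W u := by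
    intro u y hy
    have h2 : ‖y - K (extend D u)‖ ≤ ρ + CK * N u := by
      calc ‖y - K (extend D u)‖ ≤ ‖y‖ + ‖K (extend D u)‖ := norm_sub_le _ _
        _ ≤ ρ + CK * N u := add_le_add hy.le (hKN u)
    have h1 : ⟪Siginv (y - K (extend D u)), y - K (extend D u)⟫
        ≤ S * (ρ + CK * N u) ^ 2 := by
      calc ⟪Siginv (y - K (extend D u)), y - K (extend D u)⟫
          ≤ ‖Siginv (y - K (extend D u))‖ * ‖y - K (extend D u)‖ := real_inner_le_norm _ _
        _ ≤ (S * ‖y - K (extend D u)‖) * ‖y - K (extend D u)‖ :=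
            mul_le_mul_of_nonneg_right (Siginv.le_opNorm _) (norm_nonneg _)
        _ = S * ‖y - K (extend D u)‖ ^ 2 := by ring
        _ ≤ S * (ρ + CK * N u) ^ 2 :=
            mul_le_mul_of_nonneg_left (pow_le_pow_left₀ (norm_nonneg _) h2 2) hS0
    have h6 := mul_le_mul_of_nonneg_left h1 hα.le
    rw [hΦeq]
    simp only [hWdef]
    linarith
  have hWint : Integrable (fun u => Real.exp (-W u)) μ₀ := hexp_int W hWcont hW0
  set Z₀ : ℝ := ∫ u, Real.exp (-W u) ∂μ₀ with hZ₀def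
  have hZ₀pos : 0 < Z₀ := hpos_int _ hWint fun u => Real.exp_pos _
  have hZlb : ∀ y, ‖y‖ < ρ → Z₀ ≤ Z y := by
    intro y hy
    rw [hZ, hZ₀def]
    exact integral_mono hWint (hfint y)
      fun u => Real.exp_le_exp.2 (by linarith [hΦleW u y hy])
  set M₁ : ℝ := ∫ u, G u ∂μ₀ with hM₁
  set M₂ : ℝ := ∫ u, G u ^ 2 ∂μ₀ with hM₂
  have hM₁0 : 0 ≤ M₁ := integral_nonneg fun u => hG0 u
  have hM₂0 : 0 ≤ M₂ := integral_nonneg fun u => sq_nonneg _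
  have hZdiff : ∀ y y', ‖y‖ < ρ → ‖y'‖ < ρ → |Z y - Z y'| ≤ M₁ * ‖y - y'‖ := by
    intro y y' hy hy'
    rw [hZ, hZ, ← integral_sub (hfint y) (hfint y')]
    calc |∫ u, (Real.exp (-Φ u y) - Real.exp (-Φ u y')) ∂μ₀|
        ≤ ∫ u, |Real.exp (-Φ u y) - Real.exp (-Φ u y')| ∂μ₀ := abs_int_le _ _
      _ ≤ ∫ u, G u * ‖y - y'‖ ∂μ₀ := by
          refine integral_mono (((hfint y).sub (hfint y')).abs) (hGint.mul_const _)
            fun u => ?_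
          calc |Real.exp (-Φ u y) - Real.exp (-Φ u y')| ≤ |Φ u y - Φ u y'| :=
                exp_neg_lip (hΦ0 u y) (hΦ0 u y')
            _ ≤ G u * ‖y - y'‖ := hΦlip u y y' hy hy'
      _ = M₁ * ‖y - y'‖ := integral_mul_const _ _
  refine ⟨Real.sqrt (M₂ / (2 * Z₀) + M₁ ^ 2 / (2 * Z₀ ^ 3)), ?_⟩
  intro y y' hy hy'
  have hC2 : Real.sqrt (M₂ / (2 * Z₀) + M₁ ^ 2 / (2 * Z₀ ^ 3)) ^ 2
      = M₂ / (2 * Z₀) + M₁ ^ 2 / (2 * Z₀ ^ 3) := Real.sq_sqrt (by positivity)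
  rw [hC2]
  set n := ‖y - y'‖ with hn
  have hn0 : 0 ≤ n := norm_nonneg _
  set sy := (Real.sqrt (Z y))⁻¹ with hsy
  set sy' := (Real.sqrt (Z y'))⁻¹ with hsy'
  set p : C(closure D, ℝ) → ℝ := fun u => Real.exp ((-Φ u y) / 2) with hp
  set p' : C(closure D, ℝ) → ℝ := fun u => Real.exp ((-Φ u y') / 2) with hp'
  have hpsq' : ∀ u, p' u ^ 2 = Real.exp (-Φ u y') := fun u => by
    simp only [hp']
    rw [sq, ← Real.exp_add]
    ring_nf
  have hsqrt_eq : ∀ u, Real.sqrt (Real.exp (-Φ u y) / Z y) = p u * sy := by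
    intro u
    rw [Real.sqrt_div (Real.exp_pos _).le, ← Real.exp_half, div_eq_mul_inv]
  have hsqrt_eq' : ∀ u, Real.sqrt (Real.exp (-Φ u y') / Z y') = p' u * sy' := by
    intro u
    rw [Real.sqrt_div (Real.exp_pos _).le, ← Real.exp_half, div_eq_mul_inv]
  have hsy2 : sy ^ 2 = (Z y)⁻¹ := by
    rw [hsy, inv_pow, Real.sq_sqrt (hZpos y).le]
  have hpt : ∀ u, (Real.sqrt (Real.exp (-Φ u y) / Z y)
        - Real.sqrt (Real.exp (-Φ u y') / Z y')) ^ 2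
      ≤ 2 * (Z y)⁻¹ * (p u - p' u) ^ 2 + (2 * (sy - sy') ^ 2) * Real.exp (-Φ u y') := by
    intro u
    rw [hsqrt_eq u, hsqrt_eq' u, ← hpsq' u]
    nlinarith [sq_nonneg (sy * (p u - p' u) - p' u * (sy - sy')), hsy2]
  -- integrability of both sides
  have hpcont : Continuous p := by
    rw [hp]
    exact Real.continuous_exp.comp ((hΦcont y).neg.div_const 2)
  have hp'cont : Continuous p' := by
    rw [hp']
    exact Real.continuous_exp.comp ((hΦcont y').neg.div_const 2)
  have hp_mem : ∀ u, 0 < p u ∧ p u ≤ 1 := fun u => by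
    simp only [hp]
    exact ⟨Real.exp_pos _, Real.exp_le_one_iff.2 (by nlinarith [hΦ0 u y])⟩
  have hp'_mem : ∀ u, 0 < p' u ∧ p' u ≤ 1 := fun u => by
    simp only [hp']
    exact ⟨Real.exp_pos _, Real.exp_le_one_iff.2 (by nlinarith [hΦ0 u y'])⟩
  have hLHScont : Continuous fun u => (Real.sqrt (Real.exp (-Φ u y) / Z y)
      - Real.sqrt (Real.exp (-Φ u y') / Z y')) ^ 2 :=
    ((Real.continuous_sqrt.comp ((Real.continuous_exp.comp (hΦcont y).neg).div_const _)).sub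
      (Real.continuous_sqrt.comp
        ((Real.continuous_exp.comp (hΦcont y').neg).div_const _))).pow 2
  have hLHSint : Integrable (fun u => (Real.sqrt (Real.exp (-Φ u y) / Z y)
      - Real.sqrt (Real.exp (-Φ u y') / Z y')) ^ 2) μ₀ := by
    refine Integrable.mono' (integrable_const (Real.sqrt (1 / Z y) ^ 2
      + Real.sqrt (1 / Z y') ^ 2)) hLHScont.aestronglyMeasurable
      (Filter.Eventually.of_forall fun u => ?_)
    rw [Real.norm_eq_abs, abs_of_nonneg (sq_nonneg _)]
    have h1 : 0 ≤ Real.sqrt (Real.exp (-Φ u y) / Z y) := Real.sqrt_nonneg _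
    have h1' : 0 ≤ Real.sqrt (Real.exp (-Φ u y') / Z y') := Real.sqrt_nonneg _
    have h2 : Real.sqrt (Real.exp (-Φ u y) / Z y) ≤ Real.sqrt (1 / Z y) :=
      Real.sqrt_le_sqrt ((div_le_div_iff_of_pos_right (hZpos y)).2
        (Real.exp_le_one_iff.2 (by linarith [hΦ0 u y])))
    have h2' : Real.sqrt (Real.exp (-Φ u y') / Z y') ≤ Real.sqrt (1 / Z y') :=
      Real.sqrt_le_sqrt ((div_le_div_iff_of_pos_right (hZpos y')).2
        (Real.exp_le_one_iff.2 (by linarith [hΦ0 u y'])))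
    nlinarith [mul_nonneg h1 h1']
  have hppint : Integrable (fun u => (p u - p' u) ^ 2) μ₀ := by
    refine Integrable.mono' (integrable_const 1)
      ((hpcont.sub hp'cont).pow 2).aestronglyMeasurable
      (Filter.Eventually.of_forall fun u => ?_)
    rw [Real.norm_eq_abs, abs_of_nonneg (sq_nonneg _)]
    nlinarith [hp_mem u, hp'_mem u, (hp_mem u).1, (hp'_mem u).1, (hp_mem u).2, (hp'_mem u).2]
  have hRHSint1 : Integrable (fun u => 2 * (Z y)⁻¹ * (p u - p' u) ^ 2) μ₀ :=
    hppint.const_mul _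
  have hRHSint2 : Integrable (fun u => (2 * (sy - sy') ^ 2) * Real.exp (-Φ u y')) μ₀ :=
    (hfint y').const_mul _
  -- bound for ∫ (p - p')²
  have hpp_le : ∀ u, (p u - p' u) ^ 2 ≤ G u ^ 2 * (n ^ 2 / 4) := by
    intro u
    have h1 : |p u - p' u| ≤ |Φ u y - Φ u y'| / 2 := by
      simp only [hp, hp']
      rw [neg_div, neg_div]
      calc |Real.exp (-(Φ u y / 2)) - Real.exp (-(Φ u y' / 2))|
          ≤ |Φ u y / 2 - Φ u y' / 2| :=
            exp_neg_lip (by linarith [hΦ0 u y]) (by linarith [hΦ0 u y'])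
        _ = |Φ u y - Φ u y'| / 2 := by rw [div_sub_div_same, abs_div, abs_two]
    have h2 : |Φ u y - Φ u y'| ≤ G u * n := hΦlip u y y' hy hy'
    have h3 : |p u - p' u| ≤ G u * n / 2 := h1.trans (by linarith)
    nlinarith [sq_abs (p u - p' u), mul_self_le_mul_self (abs_nonneg (p u - p' u)) h3]
  have hpp_bound : (∫ u, (p u - p' u) ^ 2 ∂μ₀) ≤ M₂ * (n ^ 2 / 4) := by
    calc (∫ u, (p u - p' u) ^ 2 ∂μ₀) ≤ ∫ u, G u ^ 2 * (n ^ 2 / 4) ∂μ₀ :=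
        integral_mono hppint (hGint2.mul_const _) hpp_le
      _ = M₂ * (n ^ 2 / 4) := integral_mul_const _ _
  -- bound for (sy - sy')²
  have hsydiff : |sy - sy'| ≤ M₁ * n / (2 * Real.sqrt Z₀ ^ 3) := by
    have hden : (0 : ℝ) < 2 * Real.sqrt Z₀ ^ 3 :=
      mul_pos two_pos (pow_pos (Real.sqrt_pos.2 hZ₀pos) 3)
    have h1 : |sy - sy'| ≤ |Z y - Z y'| / (2 * Real.sqrt Z₀ ^ 3) := by
      rw [hsy, hsy']
      exact sqrt_inv_lip hZ₀pos (hZlb y hy) (hZlb y' hy')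
    exact h1.trans ((div_le_div_iff_of_pos_right hden).2 (hZdiff y y' hy hy'))
  have hsysq : (sy - sy') ^ 2 ≤ (M₁ * n) ^ 2 / (4 * Z₀ ^ 3) := by
    have hden : (0 : ℝ) < 2 * Real.sqrt Z₀ ^ 3 :=
      mul_pos two_pos (pow_pos (Real.sqrt_pos.2 hZ₀pos) 3)
    have h2 : (sy - sy') ^ 2 ≤ (M₁ * n / (2 * Real.sqrt Z₀ ^ 3)) ^ 2 := by
      nlinarith [sq_abs (sy - sy'), mul_self_le_mul_self (abs_nonneg (sy - sy')) hsydiff]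
    have hs2 : Real.sqrt Z₀ ^ 2 = Z₀ := Real.sq_sqrt hZ₀pos.le
    have h3 : (M₁ * n / (2 * Real.sqrt Z₀ ^ 3)) ^ 2 = (M₁ * n) ^ 2 / (4 * Z₀ ^ 3) := by
      rw [div_pow]
      congr 1
      calc (2 * Real.sqrt Z₀ ^ 3) ^ 2 = 4 * (Real.sqrt Z₀ ^ 2) ^ 3 := by ring
        _ = 4 * Z₀ ^ 3 := by rw [hs2]
    linarith [h3 ▸ h2]
  have hintpp0 : 0 ≤ ∫ u, (p u - p' u) ^ 2 ∂μ₀ := integral_nonneg fun u => sq_nonneg _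
  calc (∫ u, (Real.sqrt (Real.exp (-Φ u y) / Z y)
        - Real.sqrt (Real.exp (-Φ u y') / Z y')) ^ 2 ∂μ₀)
      ≤ ∫ u, (2 * (Z y)⁻¹ * (p u - p' u) ^ 2
        + (2 * (sy - sy') ^ 2) * Real.exp (-Φ u y')) ∂μ₀ :=
        integral_mono hLHSint (hRHSint1.add hRHSint2) hpt
    _ = 2 * (Z y)⁻¹ * (∫ u, (p u - p' u) ^ 2 ∂μ₀) + (2 * (sy - sy') ^ 2) * Z y' := by
        rw [integral_add hRHSint1 hRHSint2, integral_const_mul, integral_const_mul, ← hZ]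
    _ ≤ 2 * Z₀⁻¹ * (M₂ * (n ^ 2 / 4)) + (2 * ((M₁ * n) ^ 2 / (4 * Z₀ ^ 3))) * 1 := by
        have hZyinv : (Z y)⁻¹ ≤ Z₀⁻¹ := inv_anti₀ hZ₀pos (hZlb y hy)
        have t1 : 2 * (Z y)⁻¹ * (∫ u, (p u - p' u) ^ 2 ∂μ₀)
            ≤ 2 * Z₀⁻¹ * (M₂ * (n ^ 2 / 4)) := by
          nlinarith [mul_le_mul hZyinv hpp_bound hintpp0 (inv_nonneg.2 hZ₀pos.le)]
        have t2 : (2 * (sy - sy') ^ 2) * Z y'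
            ≤ (2 * ((M₁ * n) ^ 2 / (4 * Z₀ ^ 3))) * 1 := by
          nlinarith [mul_le_mul hsysq (hZle1 y') (hZpos y').le
            (le_trans (sq_nonneg _) hsysq)]
        linarith
    _ ≤ (M₂ / (2 * Z₀) + M₁ ^ 2 / (2 * Z₀ ^ 3)) * n ^ 2 := by
        have hZ0ne : Z₀ ≠ 0 := hZ₀pos.ne'
        field_simp
        ring_nf
        linarith [le_refl (0:ℝ)]
end
end

section
/- Let μ₀ be a Borel probability measure on C(D̄) (with the supremum norm), and for y ∈ ℝ^J set Z(y) = ∫ exp(−Φ_LS(v,y)) dμ₀(v), which lies in (0,1]. Then for every ρ > 0 there exists a constant C = C(ρ) such that for all y, y' ∈ ℝ^J with |y| < ρ and |y'| < ρ, one has ∫ ( √(exp(−Φ_LS(v,y))/Z(y)) − √(exp(−Φ_LS(v,y'))/Z(y')) )² dμ₀(v) ≤ C² |y − y'|²; that is, the Hellinger distance between the posterior measures with densities exp(−Φ_LS(·,y))/Z(y) and exp(−Φ_LS(·,y'))/Z(y') with respect to μ₀ is at most C |y − y'|. -/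
open MeasureTheory RealInnerProductSpace

noncomputable section

/-- The signum function: S(t) = 1 for t > 0, S(0) = 0, S(t) = −1 for t < 0. -/
def S (t : ℝ) : ℝ := if 0 < t then 1 else if t < 0 then -1 else 0

lemma two_sq_aux (x y : ℝ) : (x + y)^2 ≤ 2*x^2 + 2*y^2 := by nlinarith [sq_nonneg (x-y)]

set_option maxHeartbeats 1000000 in
lemma hell_aux {p p' Z Z' Zm L δ : ℝ} (hp : 0 < p) (hp1 : p ≤ 1) (hp' : 0 < p') (hp1' : p' ≤ 1)
    (hZm : 0 < Zm) (hZ : Zm ≤ Z) (hZ' : Zm ≤ Z') (hZ1 : Z ≤ 1) (hZ1' : Z' ≤ 1)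
    (hδ : 0 ≤ δ) (hL : 0 ≤ L)
    (hA : |Real.sqrt p - Real.sqrt p'| ≤ L * δ / 2)
    (hZZ : |Z - Z'| ≤ L * δ) :
    (Real.sqrt (p / Z) - Real.sqrt (p' / Z')) ^ 2 ≤ (L^2/(2*Zm) + L^2/(2*Zm^3)) * δ^2 := by
  have hZ0 : 0 < Z := lt_of_lt_of_le hZm hZ
  have hZ0' : 0 < Z' := lt_of_lt_of_le hZm hZ'
  have e1 : Real.sqrt (p / Z) = Real.sqrt p / Real.sqrt Z := Real.sqrt_div hp.le _
  have e1' : Real.sqrt (p' / Z') = Real.sqrt p' / Real.sqrt Z' := Real.sqrt_div hp'.le _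
  rw [e1, e1']
  set A := Real.sqrt p with hAdef
  set A' := Real.sqrt p' with hA'def
  set s := Real.sqrt Z with hsdef
  set s' := Real.sqrt Z' with hs'def
  have hs0 : 0 < s := Real.sqrt_pos.2 hZ0
  have hs0' : 0 < s' := Real.sqrt_pos.2 hZ0'
  have hss : s^2 = Z := Real.sq_sqrt hZ0.le
  have hss' : s'^2 = Z' := Real.sq_sqrt hZ0'.le
  have hsm : Real.sqrt Zm ≤ s := Real.sqrt_le_sqrt hZ
  have hsm' : Real.sqrt Zm ≤ s' := Real.sqrt_le_sqrt hZ'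
  have hsqm : (Real.sqrt Zm)^2 = Zm := Real.sq_sqrt hZm.le
  have hsqm0 : 0 < Real.sqrt Zm := Real.sqrt_pos.2 hZm
  have hAA : A^2 = p := Real.sq_sqrt hp.le
  have hAA' : A'^2 = p' := Real.sq_sqrt hp'.le
  have hA0 : 0 < A := Real.sqrt_pos.2 hp
  have hA0' : 0 < A' := Real.sqrt_pos.2 hp'
  have hA1' : A' ≤ 1 := by
    rw [hA'def]
    calc Real.sqrt p' ≤ Real.sqrt 1 := Real.sqrt_le_sqrt hp1'
    _ = 1 := Real.sqrt_one
  have decomp : A/s - A'/s' = (A - A')/s + A' * (s' - s)/(s*s') := by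
    field_simp; ring
  have sq2 : (A/s - A'/s')^2 ≤ 2*((A-A')/s)^2 + 2*(A' * (s' - s)/(s*s'))^2 := by
    rw [decomp]; exact two_sq_aux _ _
  have hds : (s' - s)^2 * (4 * Zm) ≤ (L*δ)^2 := by
    have h1 : (s' - s) * (s' + s) = Z' - Z := by nlinarith
    have h2 : (2 * Real.sqrt Zm) ≤ s' + s := by linarith
    have h3 : (Z' - Z)^2 ≤ (L*δ)^2 := by
      rw [← sq_abs (Z' - Z)]
      have habs : |Z' - Z| = |Z - Z'| := abs_sub_comm _ _
      rw [habs]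
      nlinarith [abs_nonneg (Z - Z')]
    have h4 : 4*Zm ≤ (s'+s)^2 := by nlinarith
    have h5 : (s'-s)^2 * (4*Zm) ≤ (s'-s)^2 * ((s'+s)^2) :=
      mul_le_mul_of_nonneg_left h4 (sq_nonneg _)
    have h6 : (s'-s)^2 * (s'+s)^2 = (Z'-Z)^2 := by rw [← mul_pow, h1]
    linarith
  have t1 : ((A-A')/s)^2 ≤ (L*δ/2)^2 / Zm := by
    have h1 : (A - A')^2 ≤ (L*δ/2)^2 := by
      rw [← sq_abs (A - A')]; nlinarith [abs_nonneg (A - A')]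
    rw [div_pow, hss]
    exact div_le_div₀ (by positivity) h1 hZm hZ
  have t2 : (A' * (s' - s)/(s*s'))^2 ≤ (L*δ)^2 / (4 * Zm^3) := by
    rw [div_pow, mul_pow, hAA']
    have hZZm : Zm^2 ≤ (s*s')^2 := by nlinarith
    have num : p' * (s'-s)^2 ≤ (L*δ)^2/(4*Zm) := by
      rw [le_div_iff₀ (by positivity)]
      nlinarith [sq_nonneg (s' - s)]
    calc p' * (s' - s)^2 / (s*s')^2 ≤ ((L*δ)^2/(4*Zm)) / Zm^2 :=
          div_le_div₀ (by positivity) num (by positivity) hZZm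
      _ = (L*δ)^2 / (4*Zm^3) := by rw [div_div]; ring_nf
  calc (A/s - A'/s')^2 ≤ 2*((L*δ/2)^2 / Zm) + 2*((L*δ)^2 / (4 * Zm^3)) := by linarith
    _ = (L^2/(2*Zm) + L^2/(2*Zm^3)) * δ^2 := by
      have hne : Zm ≠ 0 := hZm.ne'
      field_simp
      ring

set_option maxHeartbeats 2000000 in
/-- Let μ₀ be a Borel probability measure on C(D̄) (with the supremum norm),
and for y ∈ ℝ^J set Z(y) = ∫ exp(−Φ_LS(v,y)) dμ₀(v), which lies in (0,1]. Then for every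
ρ > 0 there exists C = C(ρ) such that for all y, y' with |y| < ρ, |y'| < ρ, the squared
Hellinger-type integral
∫ ( √(exp(−Φ_LS(v,y))/Z(y)) − √(exp(−Φ_LS(v,y'))/Z(y')) )² dμ₀(v) is at most C²|y − y'|². -/
theorem stmt_10
    (d J : ℕ)
    -- D = (0,1)^d ⊂ ℝ^d, the open unit cube
    (D : Set (EuclideanSpace ℝ (Fin d)))
    (hD : D = (WithLp.ofLp : EuclideanSpace ℝ (Fin d) → (Fin d → ℝ)) ⁻¹' (Set.univ.pi fun _ => Set.Ioo (0 : ℝ) 1))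
    -- K : L¹(D) → ℝ^J bounded linear operator (modelled via its action on integrable
    -- representatives: additive, homogeneous and bounded by the L¹(D)-norm)
    (K : (EuclideanSpace ℝ (Fin d) → ℝ) → EuclideanSpace ℝ (Fin J))
    (CK : ℝ)
    (hK_add : ∀ u v, IntegrableOn u D → IntegrableOn v D → K (u + v) = K u + K v)
    (hK_smul : ∀ (a : ℝ) u, IntegrableOn u D → K (a • u) = a • K u)
    (hK_bdd : ∀ u, IntegrableOn u D → ‖K u‖ ≤ CK * ∫ x in D, |u x|)
    -- Σ : symmetric positive definite J×J matrix, with inverse Σ⁻¹;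
    -- |Σ^{-1/2} e|² := ⟨Σ⁻¹ e, e⟩
    (Sig Siginv : EuclideanSpace ℝ (Fin J) →L[ℝ] EuclideanSpace ℝ (Fin J))
    (hSig_sym : ∀ z w, ⟪Sig z, w⟫ = ⟪z, Sig w⟫)
    (hSig_pos : ∀ z, z ≠ 0 → 0 < ⟪Sig z, z⟫)
    (hSiginv : ∀ z, Sig (Siginv z) = z ∧ Siginv (Sig z) = z)
    -- constants
    (ε c : ℝ) (hε : ε ∈ Set.Ioo (0 : ℝ) 1) (hc : 0 ≤ c)
    -- the level set data misfit Φ_LS, as a function of continuous functions on D̄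
    (ΦLS : C(closure D, ℝ) → EuclideanSpace ℝ (Fin J) → ℝ)
    (hΦLS : ∀ v y, ΦLS v y = (1 / (2 * ε ^ (2 * c))) *
      ⟪Siginv (y - K (S ∘ extend D v)), y - K (S ∘ extend D v)⟫)
    -- μ₀ : Borel probability measure on C(D̄)
    [MeasurableSpace C(closure D, ℝ)] [BorelSpace C(closure D, ℝ)]
    (μ₀ : Measure C(closure D, ℝ)) [IsProbabilityMeasure μ₀]
    -- the normalization constant
    (Z : EuclideanSpace ℝ (Fin J) → ℝ)
    (hZ : ∀ y, Z y = ∫ v, Real.exp (-ΦLS v y) ∂μ₀) :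
    (∀ y, 0 < Z y ∧ Z y ≤ 1) ∧
    ∀ ρ > (0 : ℝ), ∃ C : ℝ,
      ∀ y y' : EuclideanSpace ℝ (Fin J), ‖y‖ < ρ → ‖y'‖ < ρ →
        (∫ v, (Real.sqrt (Real.exp (-ΦLS v y) / Z y) -
            Real.sqrt (Real.exp (-ΦLS v y') / Z y')) ^ 2 ∂μ₀) ≤ C ^ 2 * ‖y - y'‖ ^ 2 := by
  obtain ⟨hε0, hε1⟩ := hε
  have hεpow : (0:ℝ) < ε ^ (2 * c) := Real.rpow_pos_of_pos hε0 _
  set a : ℝ := 1 / (2 * ε ^ (2 * c)) with ha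
  have ha0 : 0 < a := by positivity
  -- compactness of closure D
  have hDsub : closure D ⊆ (WithLp.ofLp : EuclideanSpace ℝ (Fin d) → (Fin d → ℝ)) ⁻¹'
      (Set.univ.pi fun _ => Set.Icc (0:ℝ) 1) := by
    rw [hD]
    exact closure_minimal (Set.preimage_mono (Set.pi_mono fun i _ => Set.Ioo_subset_Icc_self))
      ((isClosed_set_pi fun i _ => isClosed_Icc).preimage (PiLp.continuous_ofLp 2 _))
  have hcomp : IsCompact (closure D) :=
    (((PiLp.homeomorph 2 (fun _ : Fin d => ℝ)).isCompact_preimage).2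
      (isCompact_univ_pi fun _ => isCompact_Icc)).of_isClosed_subset isClosed_closure hDsub
  haveI : CompactSpace (closure D) := isCompact_iff_compactSpace.1 hcomp
  have hDm : MeasurableSet D := by
    rw [hD]; exact (MeasurableSet.univ_pi fun i => measurableSet_Ioo).preimage
      (PiLp.continuous_ofLp 2 _).measurable
  have hDvol : volume D < ⊤ :=
    lt_of_le_of_lt (measure_mono subset_closure) hcomp.measure_lt_top
  set V : ℝ := (volume D).toReal with hV
  have hV0 : 0 ≤ V := ENNReal.toReal_nonneg
  set B : ℝ := max CK 0 * V with hB
  have hB0 : 0 ≤ B := mul_nonneg (le_max_right _ _) hV0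
  -- S facts
  have hSm : Measurable S := by
    unfold S
    exact Measurable.ite measurableSet_Ioi measurable_const
      (Measurable.ite measurableSet_Iio measurable_const measurable_const)
  have hSb : ∀ t, |S t| ≤ 1 := by
    intro t; unfold S
    split_ifs <;> simp
  -- extend facts
  have hext_m : ∀ v : C(closure D, ℝ), Measurable (extend D v) := by
    intro v
    have h1 : Measurable fun x : (closure D : Set _) => v x := v.continuous.measurable
    have h2 : Measurable fun _ : (((closure D : Set _))ᶜ : Set _) => (0:ℝ) := measurable_const
    classical
    have h3 := Measurable.dite h1 h2 measurableSet_closure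
    unfold _root_.extend
    convert h3 using 2
  have hext_sub : ∀ (v w : C(closure D,ℝ)) (x), |extend D v x - extend D w x| ≤ dist v w := by
    intro v w x
    unfold _root_.extend
    by_cases h : x ∈ closure D
    · rw [dif_pos h, dif_pos h]
      have h1 : v ⟨x,h⟩ - w ⟨x,h⟩ = (v - w) ⟨x,h⟩ := by simp
      rw [h1, ← Real.norm_eq_abs, dist_eq_norm]
      exact ContinuousMap.norm_coe_le_norm (v - w) _
    · rw [dif_neg h, dif_neg h]; simpa using dist_nonneg
  -- integrability helpers
  have hIntOn : ∀ (u : EuclideanSpace ℝ (Fin d) → ℝ), Measurable u → (∀ x, |u x| ≤ 1) →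
      IntegrableOn u D := by
    intro u hm hb
    refine Integrable.mono' (integrableOn_const (C := (1:ℝ)) hDvol.ne)
      hm.aestronglyMeasurable (ae_of_all _ fun x => ?_)
    simpa [Real.norm_eq_abs] using hb x
  have hIntLe : ∀ (u : EuclideanSpace ℝ (Fin d) → ℝ) (M : ℝ), IntegrableOn u D → 0 ≤ M →
      (∀ x ∈ D, |u x| ≤ M) → ∫ x in D, |u x| ≤ M * V := by
    intro u M hu hM hb
    calc ∫ x in D, |u x| ≤ ∫ _x in D, M :=
        setIntegral_mono_on hu.abs (integrableOn_const hDvol.ne) hDm hb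
    _ = V * M := by rw [setIntegral_const, smul_eq_mul, measureReal_def]
    _ = M * V := mul_comm _ _
  have hIntS : ∀ v : C(closure D,ℝ), IntegrableOn (S ∘ extend D v) D := fun v =>
    hIntOn _ (hSm.comp (hext_m v)) (fun _ => hSb _)
  -- K difference bound
  have hK_sub : ∀ u w, IntegrableOn u D → IntegrableOn w D →
      ‖K u - K w‖ ≤ CK * ∫ x in D, |u x - w x| := by
    intro u w hu hw
    have hd : IntegrableOn (u - w) D := hu.sub hw
    have h2 : u = w + (u - w) := by funext x; simp
    have h1 : K u = K w + K (u - w) := by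
      conv_lhs => rw [h2]
      exact hK_add w (u - w) hw hd
    have h3 := hK_bdd (u - w) hd
    simp only [Pi.sub_apply] at h3
    rw [h1, add_sub_cancel_left]
    exact h3
  set k : C(closure D,ℝ) → EuclideanSpace ℝ (Fin J) := fun v => K (S ∘ extend D v) with hk
  have hk_bdd : ∀ v, ‖k v‖ ≤ B := by
    intro v
    calc ‖k v‖ ≤ CK * ∫ x in D, |(S ∘ extend D v) x| := hK_bdd _ (hIntS v)
    _ ≤ max CK 0 * ∫ x in D, |(S ∘ extend D v) x| :=
        mul_le_mul_of_nonneg_right (le_max_left _ _)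
          (integral_nonneg (fun x => abs_nonneg _))
    _ ≤ max CK 0 * (1 * V) := by
        refine mul_le_mul_of_nonneg_left ?_ (le_max_right _ _)
        exact hIntLe _ 1 (hIntS v) zero_le_one (fun x _ => hSb _)
    _ = B := by rw [hB]; ring
  -- Siginv facts
  have hSiginv_sym : ∀ z w, ⟪Siginv z, w⟫ = ⟪z, Siginv w⟫ := by
    intro z w
    calc ⟪Siginv z, w⟫ = ⟪Siginv z, Sig (Siginv w)⟫ := by rw [(hSiginv w).1]
    _ = ⟪Sig (Siginv z), Siginv w⟫ := (hSig_sym _ _).symm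
    _ = ⟪z, Siginv w⟫ := by rw [(hSiginv z).1]
  have hq0 : ∀ e : EuclideanSpace ℝ (Fin J), 0 ≤ ⟪Siginv e, e⟫ := by
    intro e
    rcases eq_or_ne (Siginv e) 0 with h | h
    · rw [h]; simp
    · have h2 : ⟪Siginv e, e⟫ = ⟪Siginv e, Sig (Siginv e)⟫ := by rw [(hSiginv e).1]
      rw [h2, ← hSig_sym]
      exact (hSig_pos _ h).le
  have hqb : ∀ e : EuclideanSpace ℝ (Fin J), ⟪Siginv e, e⟫ ≤ ‖Siginv‖ * ‖e‖^2 := by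
    intro e
    calc ⟪Siginv e, e⟫ ≤ ‖Siginv e‖ * ‖e‖ := real_inner_le_norm _ _
    _ ≤ (‖Siginv‖ * ‖e‖) * ‖e‖ :=
        mul_le_mul_of_nonneg_right (Siginv.le_opNorm e) (norm_nonneg _)
    _ = ‖Siginv‖ * ‖e‖^2 := by ring
  have hqdiff : ∀ e e' : EuclideanSpace ℝ (Fin J),
      ⟪Siginv e, e⟫ - ⟪Siginv e', e'⟫ = ⟪Siginv (e - e'), e + e'⟫ := by
    intro e e'
    rw [map_sub, inner_sub_left, inner_add_right, inner_add_right]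
    have h1 : ⟪Siginv e', e⟫ = ⟪Siginv e, e'⟫ := by
      rw [hSiginv_sym e' e, real_inner_comm]
    linarith [h1]
  -- Φ facts
  have hΦk : ∀ v y, ΦLS v y = a * ⟪Siginv (y - k v), y - k v⟫ := fun v y => hΦLS v y
  have hΦ0 : ∀ v y, 0 ≤ ΦLS v y := fun v y => by
    rw [hΦk]; exact mul_nonneg ha0.le (hq0 _)
  have hΦub : ∀ v (y : EuclideanSpace ℝ (Fin J)),
      ΦLS v y ≤ a * (‖Siginv‖ * (‖y‖ + B)^2) := by
    intro v y
    rw [hΦk]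
    refine mul_le_mul_of_nonneg_left ?_ ha0.le
    calc ⟪Siginv (y - k v), y - k v⟫ ≤ ‖Siginv‖ * ‖y - k v‖^2 := hqb _
    _ ≤ ‖Siginv‖ * (‖y‖ + B)^2 := by
        refine mul_le_mul_of_nonneg_left ?_ (norm_nonneg _)
        have h1 : ‖y - k v‖ ≤ ‖y‖ + B := (norm_sub_le _ _).trans (by linarith [hk_bdd v])
        exact pow_le_pow_left₀ (norm_nonneg _) h1 2
  have hΦlip : ∀ v (y y' : EuclideanSpace ℝ (Fin J)),
      |ΦLS v y - ΦLS v y'| ≤ a * ‖Siginv‖ * (‖y‖ + ‖y'‖ + 2*B) * ‖y - y'‖ := by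
    intro v y y'
    rw [hΦk v y, hΦk v y', ← mul_sub, hqdiff]
    have he : (y - k v) - (y' - k v) = y - y' := by abel
    rw [he, abs_mul, abs_of_pos ha0]
    calc a * |⟪Siginv (y - y'), (y - k v) + (y' - k v)⟫|
        ≤ a * (‖Siginv (y-y')‖ * ‖(y - k v) + (y' - k v)‖) :=
          mul_le_mul_of_nonneg_left (abs_real_inner_le_norm _ _) ha0.le
      _ ≤ a * ((‖Siginv‖ * ‖y - y'‖) * (‖y‖ + ‖y'‖ + 2*B)) := by
          refine mul_le_mul_of_nonneg_left ?_ ha0.le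
          refine mul_le_mul (Siginv.le_opNorm _) ?_ (norm_nonneg _) (by positivity)
          calc ‖(y - k v) + (y' - k v)‖ ≤ ‖y - k v‖ + ‖y' - k v‖ := norm_add_le _ _
          _ ≤ (‖y‖ + B) + (‖y'‖ + B) := by
              have h1 : ‖y - k v‖ ≤ ‖y‖ + B := (norm_sub_le _ _).trans (by linarith [hk_bdd v])
              have h2 : ‖y' - k v‖ ≤ ‖y'‖ + B := (norm_sub_le _ _).trans (by linarith [hk_bdd v])
              linarith
          _ = ‖y‖ + ‖y'‖ + 2*B := by ring
      _ = a * ‖Siginv‖ * (‖y‖ + ‖y'‖ + 2*B) * ‖y - y'‖ := by ring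
  -- approximating sequence for S
  set Sn : ℕ → ℝ → ℝ := fun n t => max (-1) (min 1 ((n:ℝ) * t)) with hSn
  have hSnc : ∀ n : ℕ, Continuous (Sn n) := fun n =>
    continuous_const.max (continuous_const.min (continuous_const.mul continuous_id))
  have hSnb : ∀ (n : ℕ) t, |Sn n t| ≤ 1 := by
    intro n t; rw [abs_le]
    constructor
    · exact le_max_left _ _
    · exact max_le (by norm_num) (min_le_left _ _)
  have hSnlip : ∀ (n : ℕ) s t, |Sn n s - Sn n t| ≤ (n:ℝ) * |s - t| := by
    intro n s t
    calc |Sn n s - Sn n t| ≤ max |(-1:ℝ) - (-1)| |min 1 ((n:ℝ)*s) - min 1 ((n:ℝ)*t)| :=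
        abs_max_sub_max_le_max _ _ _ _
    _ = |min 1 ((n:ℝ)*s) - min 1 ((n:ℝ)*t)| := by simp
    _ ≤ max |(1:ℝ) - 1| |(n:ℝ)*s - (n:ℝ)*t| := abs_min_sub_min_le_max _ _ _ _
    _ = |(n:ℝ)*s - (n:ℝ)*t| := by simp
    _ = (n:ℝ) * |s - t| := by rw [← mul_sub, abs_mul, Nat.abs_cast]
  have hSnconv : ∀ t, Filter.Tendsto (fun n => Sn n t) Filter.atTop (nhds (S t)) := by
    intro t
    rcases lt_trichotomy t 0 with h | h | h
    · have hev : ∀ᶠ n in Filter.atTop, Sn n t = S t := by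
        filter_upwards [Filter.eventually_ge_atTop ⌈1/(-t)⌉₊] with n hn
        have hn' : (1:ℝ)/(-t) ≤ (n:ℝ) := le_trans (Nat.le_ceil _) (by exact_mod_cast hn)
        have ht0 : 0 < -t := by linarith
        have hnt : (n:ℝ) * t ≤ -1 := by
          have := (div_le_iff₀ ht0).1 hn'
          nlinarith
        have hS : S t = -1 := by unfold S; rw [if_neg (by linarith), if_pos h]
        rw [hS, hSn]
        have hmin : min 1 ((n:ℝ)*t) = (n:ℝ)*t := min_eq_right (by linarith)
        simp only [hmin]
        exact max_eq_left (by linarith)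
      exact Filter.Tendsto.congr'
        (Filter.EventuallyEq.symm
          (hev : (fun n => Sn n t) =ᶠ[Filter.atTop] fun _ => S t)) tendsto_const_nhds
    · have heq : ∀ n : ℕ, Sn n t = S t := by
        intro n
        subst h
        norm_num [hSn, S]
      simp only [heq]
      exact tendsto_const_nhds
    · have hev : ∀ᶠ n in Filter.atTop, Sn n t = S t := by
        filter_upwards [Filter.eventually_ge_atTop ⌈1/t⌉₊] with n hn
        have hn' : (1:ℝ)/t ≤ (n:ℝ) := le_trans (Nat.le_ceil _) (by exact_mod_cast hn)
        have hnt : (1:ℝ) ≤ (n:ℝ) * t := by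
          have := (div_le_iff₀ h).1 hn'
          linarith
        have hS : S t = 1 := by unfold S; rw [if_pos h]
        rw [hS, hSn]
        have hmin : min 1 ((n:ℝ)*t) = 1 := min_eq_left (by linarith)
        simp only [hmin]
        exact max_eq_right (by linarith)
      exact Filter.Tendsto.congr'
        (Filter.EventuallyEq.symm
          (hev : (fun n => Sn n t) =ᶠ[Filter.atTop] fun _ => S t)) tendsto_const_nhds
  -- measurability of k
  have hIntSn : ∀ (n : ℕ) (v : C(closure D,ℝ)), IntegrableOn (Sn n ∘ extend D v) D := fun n v =>
    hIntOn _ ((hSnc n).measurable.comp (hext_m v)) (fun _ => hSnb n _)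
  have hknm : ∀ n : ℕ, Measurable (fun v : C(closure D,ℝ) => K (Sn n ∘ extend D v)) := by
    intro n
    have hlip : LipschitzWith (Real.toNNReal (max CK 0 * n * V))
        (fun v : C(closure D,ℝ) => K (Sn n ∘ extend D v)) := by
      refine LipschitzWith.of_dist_le_mul fun u w => ?_
      rw [dist_eq_norm]
      have hstep : ‖K (Sn n ∘ extend D u) - K (Sn n ∘ extend D w)‖ ≤
          max CK 0 * ((n * dist u w) * V) := by
        calc ‖K (Sn n ∘ extend D u) - K (Sn n ∘ extend D w)‖
            ≤ CK * ∫ x in D, |(Sn n ∘ extend D u) x - (Sn n ∘ extend D w) x| :=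
              hK_sub _ _ (hIntSn n u) (hIntSn n w)
          _ ≤ max CK 0 * ∫ x in D, |(Sn n ∘ extend D u) x - (Sn n ∘ extend D w) x| :=
              mul_le_mul_of_nonneg_right (le_max_left _ _)
                (integral_nonneg (fun x => abs_nonneg _))
          _ ≤ max CK 0 * ((n * dist u w) * V) := by
              refine mul_le_mul_of_nonneg_left ?_ (le_max_right _ _)
              refine hIntLe _ _ ((hIntSn n u).sub (hIntSn n w))
                (by positivity) (fun x _ => ?_)
              calc |(Sn n ∘ extend D u) x - (Sn n ∘ extend D w) x|
                  ≤ (n:ℝ) * |extend D u x - extend D w x| := hSnlip n _ _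
                _ ≤ (n:ℝ) * dist u w :=
                    mul_le_mul_of_nonneg_left (hext_sub u w x) (by positivity)
      calc ‖K (Sn n ∘ extend D u) - K (Sn n ∘ extend D w)‖
          ≤ max CK 0 * ((n * dist u w) * V) := hstep
        _ = (max CK 0 * n * V) * dist u w := by ring
        _ ≤ (Real.toNNReal (max CK 0 * n * V) : ℝ) * dist u w := by
            refine mul_le_mul_of_nonneg_right ?_ dist_nonneg
            rw [Real.coe_toNNReal']
            exact le_max_left _ _
    exact hlip.continuous.measurable
  have hkconv : ∀ v, Filter.Tendsto (fun n => K (Sn n ∘ extend D v)) Filter.atTop (nhds (k v)) := by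
    intro v
    rw [tendsto_iff_dist_tendsto_zero]
    have hbd : ∀ n, dist (K (Sn n ∘ extend D v)) (k v) ≤
        max CK 0 * ∫ x in D, |(Sn n ∘ extend D v) x - (S ∘ extend D v) x| := by
      intro n
      rw [dist_eq_norm]
      calc ‖K (Sn n ∘ extend D v) - k v‖
          ≤ CK * ∫ x in D, |(Sn n ∘ extend D v) x - (S ∘ extend D v) x| :=
            hK_sub _ _ (hIntSn n v) (hIntS v)
        _ ≤ max CK 0 * ∫ x in D, |(Sn n ∘ extend D v) x - (S ∘ extend D v) x| :=
            mul_le_mul_of_nonneg_right (le_max_left _ _)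
              (integral_nonneg (fun x => abs_nonneg _))
    have hconv0 : Filter.Tendsto
        (fun n => ∫ x in D, |(Sn n ∘ extend D v) x - (S ∘ extend D v) x|)
        Filter.atTop (nhds 0) := by
      have hDC := tendsto_integral_of_dominated_convergence (μ := volume.restrict D)
        (F := fun n x => |(Sn n ∘ extend D v) x - (S ∘ extend D v) x|)
        (f := fun _ => (0:ℝ)) (bound := fun _ => 2)
        (fun n => ((((hSnc n).measurable.comp (hext_m v)).sub
          (hSm.comp (hext_m v))).abs).aestronglyMeasurable)
        (integrableOn_const hDvol.ne)
        (fun n => ae_of_all _ fun x => by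
          have h1 := hSnb n (extend D v x)
          have h2 := hSb (extend D v x)
          simp only [Function.comp_apply, Real.norm_eq_abs, abs_abs]
          calc |Sn n (extend D v x) - S (extend D v x)|
              ≤ |Sn n (extend D v x)| + |S (extend D v x)| := abs_sub _ _
            _ ≤ 2 := by linarith)
        (ae_of_all _ fun x => by
          have h0 : Filter.Tendsto
              (fun n => Sn n (_root_.extend D v x) - S (_root_.extend D v x))
              Filter.atTop (nhds 0) := by
            have h1 := (hSnconv (_root_.extend D v x)).sub
              (tendsto_const_nhds (x := S (_root_.extend D v x))
                (f := (Filter.atTop : Filter ℕ)))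
            simpa using h1
          have h2 : Filter.Tendsto
              (fun n => |Sn n (_root_.extend D v x) - S (_root_.extend D v x)|)
              Filter.atTop (nhds 0) := by
            simpa using h0.abs
          exact h2)
      simpa using hDC
    refine squeeze_zero (fun n => dist_nonneg) hbd ?_
    have := hconv0.const_mul (max CK 0)
    simpa using this
  have hkm : Measurable k :=
    measurable_of_tendsto_metrizable' Filter.atTop hknm (tendsto_pi_nhds.2 hkconv)
  -- measurability of Φ
  have hΦm : ∀ y, Measurable (fun v => ΦLS v y) := by
    intro y
    have heq : (fun v => ΦLS v y) = fun v => a * ⟪Siginv (y - k v), y - k v⟫ :=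
      funext fun v => hΦk v y
    rw [heq]
    have hcont : Continuous (fun e : EuclideanSpace ℝ (Fin J) => a * ⟪Siginv (y - e), y - e⟫) :=
      continuous_const.mul ((Siginv.continuous.comp
        (continuous_const.sub continuous_id)).inner (continuous_const.sub continuous_id))
    exact hcont.measurable.comp hkm
  -- integrability of densities
  have hfm : ∀ y, Measurable (fun v => Real.exp (-ΦLS v y)) := fun y =>
    Real.measurable_exp.comp (hΦm y).neg
  have hf_le1 : ∀ y v, Real.exp (-ΦLS v y) ≤ 1 := fun y v =>
    Real.exp_le_one_iff.2 (neg_nonpos.2 (hΦ0 v y))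
  have hf_pos : ∀ y v, 0 < Real.exp (-ΦLS v y) := fun _ _ => Real.exp_pos _
  have hfi : ∀ y, Integrable (fun v => Real.exp (-ΦLS v y)) μ₀ := by
    intro y
    refine Integrable.mono' (integrable_const 1) (hfm y).aestronglyMeasurable
      (ae_of_all _ fun v => ?_)
    rw [Real.norm_eq_abs, abs_of_pos (hf_pos y v)]
    exact hf_le1 y v
  -- Z bounds
  have hZlb : ∀ (y : EuclideanSpace ℝ (Fin J)) (m : ℝ), (∀ v, m ≤ Real.exp (-ΦLS v y)) →
      m ≤ Z y := by
    intro y m hm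
    rw [hZ]
    calc m = ∫ _v, m ∂μ₀ := by simp
    _ ≤ ∫ v, Real.exp (-ΦLS v y) ∂μ₀ := integral_mono (integrable_const m) (hfi y) hm
  have hZub : ∀ y, Z y ≤ 1 := by
    intro y; rw [hZ]
    calc ∫ v, Real.exp (-ΦLS v y) ∂μ₀ ≤ ∫ _v, (1:ℝ) ∂μ₀ :=
        integral_mono (hfi y) (integrable_const 1) (fun v => hf_le1 y v)
    _ = 1 := by simp
  have hZpos : ∀ y, 0 < Z y := by
    intro y
    have hlb := hZlb y (Real.exp (-(a * (‖Siginv‖ * (‖y‖ + B)^2))))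
      (fun v => Real.exp_le_exp.2 (by have := hΦub v y; linarith))
    linarith [Real.exp_pos (-(a * (‖Siginv‖ * (‖y‖ + B)^2)))]
  refine ⟨fun y => ⟨hZpos y, hZub y⟩, ?_⟩
  -- Part 2
  intro ρ hρ
  set M : ℝ := a * (‖Siginv‖ * (ρ + B)^2) with hM
  set Zm : ℝ := Real.exp (-M) with hZmdef
  have hZm0 : 0 < Zm := Real.exp_pos _
  set L : ℝ := a * ‖Siginv‖ * (2*ρ + 2*B) with hLdef
  have hL0 : 0 ≤ L := by
    refine mul_nonneg (mul_nonneg ha0.le (norm_nonneg _)) (by linarith)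
  refine ⟨Real.sqrt (L^2/(2*Zm) + L^2/(2*Zm^3)), ?_⟩
  intro y y' hy hy'
  have hflb : ∀ (z : EuclideanSpace ℝ (Fin J)), ‖z‖ < ρ → ∀ v, Zm ≤ Real.exp (-ΦLS v z) := by
    intro z hz v
    rw [hZmdef]
    refine Real.exp_le_exp.2 (neg_le_neg ?_)
    have h1 : ΦLS v z ≤ a * (‖Siginv‖ * (‖z‖ + B)^2) := hΦub v z
    have h2 : a * (‖Siginv‖ * (‖z‖+B)^2) ≤ M := by
      rw [hM]
      refine mul_le_mul_of_nonneg_left ?_ ha0.le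
      refine mul_le_mul_of_nonneg_left ?_ (norm_nonneg _)
      exact pow_le_pow_left₀ (by positivity) (by linarith) 2
    linarith
  have hZylb : Zm ≤ Z y := hZlb y Zm (hflb y hy)
  have hZy'lb : Zm ≤ Z y' := hZlb y' Zm (hflb y' hy')
  have hΦL : ∀ v, |ΦLS v y - ΦLS v y'| ≤ L * ‖y - y'‖ := by
    intro v
    calc |ΦLS v y - ΦLS v y'| ≤ a * ‖Siginv‖ * (‖y‖ + ‖y'‖ + 2*B) * ‖y - y'‖ := hΦlip v y y'
    _ ≤ L * ‖y - y'‖ := by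
        refine mul_le_mul_of_nonneg_right ?_ (norm_nonneg _)
        rw [hLdef]
        exact mul_le_mul_of_nonneg_left (by linarith)
          (mul_nonneg ha0.le (norm_nonneg _))
  have hfdiff : ∀ v, |Real.exp (-ΦLS v y) - Real.exp (-ΦLS v y')| ≤ L * ‖y - y'‖ := by
    intro v
    calc |Real.exp (-ΦLS v y) - Real.exp (-ΦLS v y')| ≤ |ΦLS v y - ΦLS v y'| :=
        exp_neg_lip (hΦ0 v y) (hΦ0 v y')
    _ ≤ L * ‖y - y'‖ := hΦL v
  have hZdiff : |Z y - Z y'| ≤ L * ‖y - y'‖ := by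
    rw [hZ y, hZ y', ← integral_sub (hfi y) (hfi y')]
    calc |∫ v, (Real.exp (-ΦLS v y) - Real.exp (-ΦLS v y')) ∂μ₀|
        ≤ ∫ v, |Real.exp (-ΦLS v y) - Real.exp (-ΦLS v y')| ∂μ₀ := by
          simpa [Real.norm_eq_abs] using
            norm_integral_le_integral_norm (μ := μ₀)
              (fun v => Real.exp (-ΦLS v y) - Real.exp (-ΦLS v y'))
      _ ≤ ∫ _v, L * ‖y - y'‖ ∂μ₀ :=
          integral_mono ((hfi y).sub (hfi y')).abs (integrable_const _) (fun v => hfdiff v)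
      _ = L * ‖y - y'‖ := by simp
  have hsq : ∀ v, |Real.sqrt (Real.exp (-ΦLS v y)) - Real.sqrt (Real.exp (-ΦLS v y'))| ≤
      L * ‖y - y'‖ / 2 := by
    intro v
    rw [← Real.exp_half, ← Real.exp_half]
    have h1 : -ΦLS v y / 2 = -(ΦLS v y / 2) := by ring
    have h2 : -ΦLS v y' / 2 = -(ΦLS v y' / 2) := by ring
    rw [h1, h2]
    calc |Real.exp (-(ΦLS v y / 2)) - Real.exp (-(ΦLS v y' / 2))|
        ≤ |ΦLS v y / 2 - ΦLS v y' / 2| :=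
          exp_neg_lip (by linarith [hΦ0 v y]) (by linarith [hΦ0 v y'])
      _ = |ΦLS v y - ΦLS v y'| / 2 := by
          rw [show ΦLS v y / 2 - ΦLS v y' / 2 = (ΦLS v y - ΦLS v y') / 2 by ring,
            abs_div, abs_two]
      _ ≤ L * ‖y - y'‖ / 2 := by linarith [hΦL v]
  have hpt : ∀ v, (Real.sqrt (Real.exp (-ΦLS v y) / Z y) -
      Real.sqrt (Real.exp (-ΦLS v y') / Z y'))^2 ≤
      (L^2/(2*Zm) + L^2/(2*Zm^3)) * ‖y - y'‖^2 := fun v =>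
    hell_aux (hf_pos y v) (hf_le1 y v) (hf_pos y' v) (hf_le1 y' v) hZm0 hZylb hZy'lb
      (hZub y) (hZub y') (norm_nonneg _) hL0 (hsq v) hZdiff
  have hintg : Integrable (fun v => (Real.sqrt (Real.exp (-ΦLS v y) / Z y) -
      Real.sqrt (Real.exp (-ΦLS v y') / Z y'))^2) μ₀ := by
    refine Integrable.mono' (integrable_const ((L^2/(2*Zm) + L^2/(2*Zm^3)) * ‖y - y'‖^2))
      ?_ (ae_of_all _ fun v => ?_)
    · exact (((Real.continuous_sqrt.measurable.comp ((hfm y).div_const (Z y))).sub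
        (Real.continuous_sqrt.measurable.comp ((hfm y').div_const (Z y')))).pow_const 2
        ).aestronglyMeasurable
    · rw [Real.norm_eq_abs, abs_of_nonneg (sq_nonneg _)]
      exact hpt v
  have hnn : 0 ≤ L^2/(2*Zm) + L^2/(2*Zm^3) := by
    have h1 : 0 < 2*Zm := by linarith
    have h2 : 0 < 2*Zm^3 := by positivity
    exact add_nonneg (div_nonneg (sq_nonneg _) h1.le) (div_nonneg (sq_nonneg _) h2.le)
  calc (∫ v, (Real.sqrt (Real.exp (-ΦLS v y) / Z y) -
        Real.sqrt (Real.exp (-ΦLS v y') / Z y')) ^ 2 ∂μ₀)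
      ≤ ∫ _v, (L^2/(2*Zm) + L^2/(2*Zm^3)) * ‖y - y'‖^2 ∂μ₀ :=
        integral_mono hintg (integrable_const _) hpt
    _ = (L^2/(2*Zm) + L^2/(2*Zm^3)) * ‖y - y'‖^2 := by simp
    _ = (Real.sqrt (L^2/(2*Zm) + L^2/(2*Zm^3)))^2 * ‖y - y'‖^2 := by
        rw [Real.sq_sqrt hnn]
end
end

section
/- For y ∈ ℝ^J define the functional J(u) = (1/2)‖u‖² + (1/2)⟨Σ⁻¹(y − Tu), y − Tu⟩ for u ∈ H, where Σ⁻¹ is the inverse of Σ. Then m := T*((Σ + T T*)⁻¹ y) is the unique global minimizer of J; that is, J(u) > J(m) for every u ∈ H with u ≠ m. -/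
open RealInnerProductSpace ContinuousLinearMap

noncomputable section

/-- For y ∈ ℝ^J define J(u) = (1/2)‖u‖² + (1/2)⟨Σ⁻¹(y − Tu), y − Tu⟩ for
u ∈ H, where Σ⁻¹ is the inverse of Σ. Then m := T*((Σ + T T*)⁻¹ y) is the unique global
minimizer of J; that is, J(u) > J(m) for every u ∈ H with u ≠ m. Here H is a real Hilbert
space, T : H → ℝ^J is a continuous linear map with Hilbert adjoint T*, and Σ : ℝ^J → ℝ^J is
self-adjoint positive definite. -/
theorem stmt_14
    {H : Type*} [NormedAddCommGroup H] [InnerProductSpace ℝ H] [CompleteSpace H]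
    (J : ℕ)
    (T : H →L[ℝ] EuclideanSpace ℝ (Fin J))
    (Sig : EuclideanSpace ℝ (Fin J) →L[ℝ] EuclideanSpace ℝ (Fin J))
    (hSig_sym : ∀ z w, ⟪Sig z, w⟫ = ⟪z, Sig w⟫)
    (hSig_pos : ∀ z, z ≠ 0 → 0 < ⟪Sig z, z⟫)
    -- Σ⁻¹ : the inverse of Σ
    (Siginv : EuclideanSpace ℝ (Fin J) →L[ℝ] EuclideanSpace ℝ (Fin J))
    (hSiginv : ∀ z, Sig (Siginv z) = z ∧ Siginv (Sig z) = z)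
    -- (Σ + T T*)⁻¹ : the inverse of Σ + T T*
    (Ainv : EuclideanSpace ℝ (Fin J) →L[ℝ] EuclideanSpace ℝ (Fin J))
    (hAinv : ∀ z, (Sig + T ∘L T.adjoint) (Ainv z) = z ∧ Ainv ((Sig + T ∘L T.adjoint) z) = z)
    (y : EuclideanSpace ℝ (Fin J))
    -- the functional J
    (Jfun : H → ℝ)
    (hJfun : ∀ u, Jfun u = (1 / 2) * ‖u‖ ^ 2 + (1 / 2) * ⟪Siginv (y - T u), y - T u⟫)
    -- the candidate minimizer m
    (m : H) (hm : m = T.adjoint (Ainv y)) :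
    ∀ u : H, u ≠ m → Jfun m < Jfun u := by
  -- Siginv is self-adjoint
  have hsym : ∀ a b, ⟪Siginv a, b⟫ = ⟪a, Siginv b⟫ := by
    intro a b
    calc ⟪Siginv a, b⟫ = ⟪Siginv a, Sig (Siginv b)⟫ := by rw [(hSiginv b).1]
      _ = ⟪Sig (Siginv a), Siginv b⟫ := (hSig_sym _ _).symm
      _ = ⟪a, Siginv b⟫ := by rw [(hSiginv a).1]
  have hnonneg : ∀ w, 0 ≤ ⟪Siginv w, w⟫ := by
    intro w
    by_cases h : Siginv w = 0
    · simp [h]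
    · have h1 := hSig_pos _ h
      have h2 : ⟪Sig (Siginv w), Siginv w⟫ = ⟪Siginv w, w⟫ := by
        rw [(hSiginv w).1, real_inner_comm]
      linarith [h1, h2]
  -- key: y - T m = Sig (Ainv y)
  have hkey : y - T m = Sig (Ainv y) := by
    have h1 := (hAinv y).1
    simp only [ContinuousLinearMap.add_apply, ContinuousLinearMap.comp_apply] at h1
    rw [hm]
    exact (eq_sub_of_add_eq h1).symm
  have hSiginva : Siginv (y - T m) = Ainv y := by
    rw [hkey, (hSiginv _).2]
  intro u hu
  set v := u - m with hv
  have hv0 : v ≠ 0 := sub_ne_zero_of_ne hu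
  have hu' : u = m + v := by rw [hv]; abel
  -- cross term
  have hcross : ⟪m, v⟫ = ⟪Siginv (y - T m), T v⟫ := by
    rw [hSiginva, hm, ContinuousLinearMap.adjoint_inner_left]
  -- expand norms
  have hnorm : ‖u‖ ^ 2 = ‖m‖ ^ 2 + 2 * ⟪m, v⟫ + ‖v‖ ^ 2 := by
    rw [hu']
    exact norm_add_sq_real m v
  -- expand the quadratic form
  have hTu : y - T u = (y - T m) - T v := by
    rw [hu', map_add]
    abel
  have hquad : ⟪Siginv (y - T u), y - T u⟫
      = ⟪Siginv (y - T m), y - T m⟫ - 2 * ⟪Siginv (y - T m), T v⟫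
        + ⟪Siginv (T v), T v⟫ := by
    rw [hTu, map_sub, inner_sub_left]
    simp only [inner_sub_right]
    have h3 : ⟪Siginv (T v), y⟫ - ⟪Siginv (T v), T m⟫ = ⟪Siginv (y - T m), T v⟫ := by
      rw [← inner_sub_right, hsym, real_inner_comm]
    linarith
  have hvpos : (0:ℝ) < ‖v‖ ^ 2 := by
    have := norm_pos_iff.mpr hv0
    positivity
  have h4 := hnonneg (T v)
  rw [hJfun u, hJfun m, hnorm, hquad]
  nlinarith [hcross]
end
end
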